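/- arXiv:2104.10754 — 10 statements merged into one kernel-verified Lean document; each statement's English description precedes it below -/
import Mathlib

section
/- For every prime p ≥ 5, the binomial coefficient C(2p-1, p-1) is congruent to 1 modulo p^3. -/
open Finset Nat

/-- detect divisibility in ZMod n via cast to ZMod m -/
lemma zmod_div_of_cast_eq_zero {n m : ℕ} [NeZero n] (hm : m ∣ n) (x : ZMod n)
    (h : (ZMod.castHom hm (ZMod m)) x = 0) : ∃ y : ZMod n, x = (m : ZMod n) * y := by
  have h1 : ((x.val : ℕ) : ZMod m) = 0 := by
    rwa [ZMod.natCast_val, ← ZMod.castHom_apply (h := hm)]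
  have h2 : m ∣ x.val := (ZMod.natCast_eq_zero_iff _ _).mp h1
  obtain ⟨c, hc⟩ := h2
  exact ⟨(c : ZMod n), by rw [← ZMod.natCast_zmod_val x, hc]; push_cast; ring⟩

lemma map_inv_unit {n m : ℕ} (f : ZMod n →+* ZMod m) (a : ZMod n)
    (ha : IsUnit a) (hfa : IsUnit (f a)) : f a⁻¹ = (f a)⁻¹ := by
  have h1 : f a * f a⁻¹ = 1 := by rw [← map_mul, ZMod.mul_inv_of_unit a ha, map_one]
  have h2 : (f a)⁻¹ * f a = 1 := ZMod.inv_mul_of_unit (f a) hfa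
  calc f a⁻¹ = ((f a)⁻¹ * f a) * f a⁻¹ := by rw [h2, one_mul]
    _ = (f a)⁻¹ * (f a * f a⁻¹) := by ring
    _ = (f a)⁻¹ := by rw [h1, mul_one]

lemma sum_range_cast {p : ℕ} [NeZero p] {M : Type} [AddCommMonoid M] (f : ZMod p → M) :
    ∑ k ∈ range p, f (k : ZMod p) = ∑ x : ZMod p, f x := by
  refine Finset.sum_nbij' (fun k => (k : ZMod p)) (fun x => x.val) ?_ ?_ ?_ ?_ ?_
  · intro k hk; exact mem_univ _
  · intro x hx; simp [ZMod.val_lt x]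
  · intro k hk; exact ZMod.val_cast_of_lt (mem_range.mp hk)
  · intro x hx; exact ZMod.natCast_zmod_val x
  · intro k hk; rfl

lemma sumA (p : ℕ) [NeZero p] (hp : p.Prime) (h5 : 5 ≤ p) : ∑ x : ZMod p, (x⁻¹)^2 = 0 := by
  haveI : Fact p.Prime := ⟨hp⟩
  haveI : NeZero p := ⟨hp.ne_zero⟩
  set S := ∑ x : ZMod p, (x⁻¹)^2 with hS
  have h2 : (2 : ZMod p) ≠ 0 := by
    intro h
    have h' : ((2 : ℕ) : ZMod p) = 0 := by push_cast; exact h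
    have := (ZMod.natCast_eq_zero_iff 2 p).mp h'
    have := Nat.le_of_dvd (by norm_num) this; omega
  have h3 : (3 : ZMod p) ≠ 0 := by
    intro h
    have h' : ((3 : ℕ) : ZMod p) = 0 := by push_cast; exact h
    have := (ZMod.natCast_eq_zero_iff 3 p).mp h'
    have := Nat.le_of_dvd (by norm_num) this; omega
  have hbij : Function.Bijective (fun x : ZMod p => 2 * x) :=
    mulLeft_bijective₀ 2 h2
  have key : S = ∑ x : ZMod p, ((2*x)⁻¹)^2 :=
    (Fintype.sum_bijective _ hbij _ _ (fun x => rfl)).symm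
  have key2 : ∀ x : ZMod p, ((2*x)⁻¹)^2 = (2⁻¹)^2 * (x⁻¹)^2 := by
    intro x; rw [mul_inv]; ring
  rw [Finset.sum_congr rfl (fun x _ => key2 x), ← Finset.mul_sum, ← hS] at key
  have h4 : (4 : ZMod p) * S = S := by
    calc (4 : ZMod p) * S = (2*2) * ((2⁻¹)^2 * S) := by rw [← key]; norm_num
      _ = (2 * 2⁻¹) * (2 * 2⁻¹) * S := by ring
      _ = S := by rw [mul_inv_cancel₀ h2]; ring
  have : (3 : ZMod p) * S = 0 := by linear_combination h4
  exact (mul_eq_zero.mp this).resolve_left h3 |>.symm ▸ rfl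

lemma sumA' (p : ℕ) (hp : p.Prime) (h5 : 5 ≤ p) :
    ∑ k ∈ Ico 1 p, ((k : ZMod p)⁻¹)^2 = 0 := by
  haveI : NeZero p := ⟨hp.ne_zero⟩
  haveI : Fact p.Prime := ⟨hp⟩
  have h0 : ∑ k ∈ range p, (((k : ZMod p))⁻¹)^2 = 0 := by
    rw [sum_range_cast (fun x => (x⁻¹)^2)]; exact sumA p hp h5
  have hp0 : 0 < p := by omega
  rw [range_eq_Ico, Finset.sum_eq_sum_Ico_succ_bot hp0] at h0
  simpa using h0

lemma coprime_of_lt {p k : ℕ} (hp : p.Prime) (h1 : 1 ≤ k) (h2 : k < p) : Nat.Coprime k p :=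
  (Nat.coprime_comm.mp (hp.coprime_iff_not_dvd.mpr (Nat.not_dvd_of_pos_of_lt h1 h2)))

lemma unit_cast {p k : ℕ} (hp : p.Prime) (h1 : 1 ≤ k) (h2 : k < p) (j : ℕ) :
    IsUnit ((k : ZMod (p^j))) :=
  (ZMod.isUnit_iff_coprime k (p^j)).mpr ((coprime_of_lt hp h1 h2).pow_right j)

lemma inv_add_inv_unit {n : ℕ} (a b : ZMod n) (ha : IsUnit a) (hb : IsUnit b) :
    a⁻¹ + b⁻¹ = (a + b) * (a⁻¹ * b⁻¹) := by
  have h1 := ZMod.mul_inv_of_unit a ha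
  have h2 := ZMod.mul_inv_of_unit b hb
  calc a⁻¹ + b⁻¹ = (b * b⁻¹) * a⁻¹ + (a * a⁻¹) * b⁻¹ := by rw [h1, h2]; ring
    _ = (a + b) * (a⁻¹ * b⁻¹) := by ring

lemma prodC {S : Type} [CommRing S] (π : S) (hπ : π^3 = 0) (a : ℕ → S) (s : Finset ℕ) :
    2 * ∏ k ∈ s, (1 + π * a k) =
      2 + 2 * π * (∑ k ∈ s, a k) + π^2 * ((∑ k ∈ s, a k)^2 - ∑ k ∈ s, (a k)^2) := by
  induction s using Finset.induction with
  | empty => simp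
  | insert x s' h ih =>
    rw [prod_insert h, sum_insert h, sum_insert h]
    linear_combination (1 + π * a x) * ih +
      (a x * ((∑ k ∈ s', a k)^2 - ∑ k ∈ s', (a k)^2)) * hπ


lemma sumB (p : ℕ) (hp : p.Prime) (h5 : 5 ≤ p) :
    ∑ k ∈ Ico 1 p, ((k : ZMod (p^2)))⁻¹ = 0 := by
  haveI : Fact p.Prime := ⟨hp⟩
  haveI : NeZero p := ⟨hp.ne_zero⟩
  haveI : NeZero (p^2) := ⟨pow_ne_zero 2 hp.ne_zero⟩
  set σ := ∑ k ∈ Ico 1 p, ((k : ZMod (p^2)))⁻¹ with hσ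
  -- reindex k ↦ p - k
  have hre : σ = ∑ k ∈ Ico 1 p, (((p - k : ℕ) : ZMod (p^2)))⁻¹ := by
    rw [hσ]
    refine Finset.sum_nbij' (fun k => p - k) (fun k => p - k) ?_ ?_ ?_ ?_ ?_ <;>
      intro k hk <;> simp only [mem_Ico] at hk ⊢ <;> try omega
    congr 1; congr 1; omega
  have h2σ : 2 * σ = (p : ZMod (p^2)) *
      ∑ k ∈ Ico 1 p, ((k : ZMod (p^2)))⁻¹ * (((p - k : ℕ) : ZMod (p^2)))⁻¹ := by
    calc 2 * σ = σ + σ := two_mul σ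
      _ = ∑ k ∈ Ico 1 p, (((k : ZMod (p^2)))⁻¹ + (((p - k : ℕ) : ZMod (p^2)))⁻¹) := by
          rw [Finset.sum_add_distrib, ← hσ, ← hre]
      _ = ∑ k ∈ Ico 1 p, (p : ZMod (p^2)) * (((k : ZMod (p^2)))⁻¹ * (((p - k : ℕ) : ZMod (p^2)))⁻¹) := by
          refine Finset.sum_congr rfl ?_
          intro k hk
          simp only [mem_Ico] at hk
          have hu1 : IsUnit ((k : ZMod (p^2))) := unit_cast hp hk.1 hk.2 2
          have hu2 : IsUnit (((p - k : ℕ) : ZMod (p^2))) := unit_cast hp (by omega) (by omega) 2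
          rw [inv_add_inv_unit _ _ hu1 hu2]
          have : ((k : ZMod (p^2))) + (((p - k : ℕ) : ZMod (p^2))) = (p : ZMod (p^2)) := by
            rw [← Nat.cast_add]; congr 1; omega
          rw [this]
      _ = _ := by rw [Finset.mul_sum]
  set T := ∑ k ∈ Ico 1 p, ((k : ZMod (p^2)))⁻¹ * (((p - k : ℕ) : ZMod (p^2)))⁻¹ with hT
  have hdvd : (p : ℕ) ∣ p^2 := dvd_pow_self p two_ne_zero
  set f2 := ZMod.castHom hdvd (ZMod p) with hf2
  have hf2T : f2 T = 0 := by
    rw [hT, map_sum]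
    have : ∀ k ∈ Ico 1 p,
        f2 (((k : ZMod (p^2)))⁻¹ * (((p - k : ℕ) : ZMod (p^2)))⁻¹)
          = - (((k : ZMod p))⁻¹)^2 := by
      intro k hk
      simp only [mem_Ico] at hk
      have hu1 : IsUnit ((k : ZMod (p^2))) := unit_cast hp hk.1 hk.2 2
      have hu2 : IsUnit (((p - k : ℕ) : ZMod (p^2))) := unit_cast hp (by omega) (by omega) 2
      have hv1 : IsUnit ((k : ZMod p)) := by
        have := unit_cast hp hk.1 hk.2 1; rwa [pow_one] at this
      have hv2 : IsUnit (((p - k : ℕ) : ZMod p)) := by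
        have := unit_cast (k := p - k) hp (by omega) (by omega) 1; rwa [pow_one] at this
      rw [map_mul, map_inv_unit f2 _ hu1 (by rwa [map_natCast]),
        map_inv_unit f2 _ hu2 (by rwa [map_natCast]), map_natCast, map_natCast]
      have hneg : (((p - k : ℕ) : ZMod p)) = - (k : ZMod p) := by
        have : ((p : ℕ) : ZMod p) = 0 := ZMod.natCast_self p
        rw [Nat.cast_sub (by omega)]
        rw [this]; ring
      rw [hneg]
      rw [inv_neg]
      ring
    rw [Finset.sum_congr rfl this, Finset.sum_neg_distrib, neg_eq_zero]
    exact sumA' p hp h5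
  obtain ⟨s, hs⟩ := zmod_div_of_cast_eq_zero hdvd T hf2T
  have hps : (p : ZMod (p^2)) * ((p : ZMod (p^2)) * s) = 0 := by
    rw [← mul_assoc, ← Nat.cast_mul, ← pow_two, ZMod.natCast_self]
    ring
  have h2σ0 : 2 * σ = 0 := by rw [h2σ, hs]; exact hps
  have hu2 : IsUnit ((2 : ℕ) : ZMod (p^2)) := unit_cast hp (by omega) (by omega) 2
  have := ZMod.inv_mul_of_unit _ hu2
  calc σ = (((2:ℕ) : ZMod (p^2))⁻¹ * ((2:ℕ) : ZMod (p^2))) * σ := by rw [this, one_mul]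
    _ = ((2:ℕ) : ZMod (p^2))⁻¹ * (2 * σ) := by push_cast; ring
    _ = 0 := by rw [h2σ0, mul_zero]

theorem stmt_0 (p : ℕ) (hp : p.Prime) (h5 : 5 ≤ p) :
    Nat.choose (2 * p - 1) (p - 1) ≡ 1 [MOD p ^ 3] := by
  haveI : Fact p.Prime := ⟨hp⟩
  haveI : NeZero p := ⟨hp.ne_zero⟩
  haveI : NeZero (p^3) := ⟨pow_ne_zero 3 hp.ne_zero⟩
  set C := Nat.choose (2 * p - 1) (p - 1) with hC
  set N : ℕ := ∏ k ∈ Ico 1 p, (p + k) with hN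
  -- (2p-1) ! = p! * N
  have hfac : (2*p - 1) ! = p ! * N := by
    have h3 : (∏ i ∈ Ico 1 (p+1), i) * (∏ i ∈ Ico (p+1) (2*p-1+1), i)
        = ∏ i ∈ Ico 1 (2*p-1+1), i :=
      Finset.prod_Ico_consecutive _ (by omega) (by omega)
    have h4 : ∏ i ∈ Ico (p+1) (2*p-1+1), i = N := by
      rw [hN, Finset.prod_Ico_eq_prod_range, Finset.prod_Ico_eq_prod_range]
      rw [show 2*p-1+1 - (p+1) = p - 1 from by omega]
      exact Finset.prod_congr rfl (fun i _ => by omega)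
    rw [← Finset.prod_Ico_id_eq_factorial (2*p-1), ← h3, h4,
      Finset.prod_Ico_id_eq_factorial p]
  have hkey : C * (p-1) ! = N := by
    have h1 : C * (p-1) ! * ((2*p-1) - (p-1)) ! = (2*p-1) ! :=
      Nat.choose_mul_factorial_mul_factorial (by omega)
    rw [show (2*p-1) - (p-1) = p from by omega] at h1
    have h2 : C * (p-1) ! * p ! = N * p ! := by rw [h1, hfac]; ring
    exact Nat.eq_of_mul_eq_mul_right (Nat.factorial_pos p) h2
  -- move to ZMod (p^3)
  set R := ZMod (p^3) with hR
  set a : ℕ → R := fun k => ((k : R))⁻¹ with ha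
  have hcast : (C : R) * (((p-1) ! : ℕ) : R) = (N : R) := by
    rw [← Nat.cast_mul, hkey]
  have hNsplit : (N : R) = (((p-1) ! : ℕ) : R) * ∏ k ∈ Ico 1 p, (1 + (p : R) * a k) := by
    have hterm : ∀ k ∈ Ico 1 p, ((p + k : ℕ) : R) = (k : R) * (1 + (p : R) * a k) := by
      intro k hk
      simp only [mem_Ico] at hk
      have hu : IsUnit ((k : R)) := unit_cast hp hk.1 hk.2 3
      have := ZMod.mul_inv_of_unit _ hu
      push_cast
      rw [ha]
      calc (p : R) + (k : R) = (k : R) + (p : R) * ((k:R) * ((k:R))⁻¹) := by rw [this]; ring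
        _ = (k:R) * (1 + (p:R) * ((k:R))⁻¹) := by ring
    have hprodfac : (∏ i ∈ Ico 1 p, (i : R)) = (((p-1) ! : ℕ) : R) := by
      rw [← Nat.cast_prod]
      congr 1
      obtain ⟨q, rfl⟩ : ∃ q, p = q + 1 := ⟨p - 1, by omega⟩
      simpa using Finset.prod_Ico_id_eq_factorial q
    rw [hN, Nat.cast_prod, Finset.prod_congr rfl hterm, Finset.prod_mul_distrib, hprodfac]
  -- the product is 1
  have hπ : (p : R)^3 = 0 := by
    rw [← Nat.cast_pow]; exact ZMod.natCast_self _
  have hmain := prodC (p : R) hπ a (Ico 1 p)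
  set σ1 : R := ∑ k ∈ Ico 1 p, a k with hσ1
  set Q : R := ∑ k ∈ Ico 1 p, (a k)^2 with hQ
  -- σ1 is divisible by p^2
  have hdvd2 : (p^2 : ℕ) ∣ p^3 := pow_dvd_pow p (by norm_num)
  have hσ1div : ∃ t : R, σ1 = ((p^2 : ℕ) : R) * t := by
    apply zmod_div_of_cast_eq_zero hdvd2
    set f2 := ZMod.castHom hdvd2 (ZMod (p^2)) with hf2
    rw [hσ1, map_sum]
    have : ∀ k ∈ Ico 1 p, f2 (a k) = ((k : ZMod (p^2)))⁻¹ := by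
      intro k hk
      simp only [mem_Ico] at hk
      rw [ha]
      rw [map_inv_unit f2 _ (unit_cast hp hk.1 hk.2 3) (by rw [map_natCast]; exact unit_cast hp hk.1 hk.2 2), map_natCast]
    rw [Finset.sum_congr rfl this]
    exact sumB p hp h5
  -- Q is divisible by p
  have hdvd1 : (p : ℕ) ∣ p^3 := dvd_pow_self p three_ne_zero
  have hQdiv : ∃ s : R, Q = ((p : ℕ) : R) * s := by
    apply zmod_div_of_cast_eq_zero hdvd1
    set f2 := ZMod.castHom hdvd1 (ZMod p) with hf2
    rw [hQ, map_sum]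
    have : ∀ k ∈ Ico 1 p, f2 ((a k)^2) = (((k : ZMod p))⁻¹)^2 := by
      intro k hk
      simp only [mem_Ico] at hk
      have h1 : IsUnit ((k : ZMod p)) := by
        have := unit_cast (k := k) hp hk.1 hk.2 1; rwa [pow_one] at this
      rw [ha, map_pow]
      rw [map_inv_unit f2 _ (unit_cast hp hk.1 hk.2 3) (by rw [map_natCast]; exact h1), map_natCast]
    rw [Finset.sum_congr rfl this]
    exact sumA' p hp h5
  obtain ⟨t, ht⟩ := hσ1div
  obtain ⟨s, hs⟩ := hQdiv
  have hp3 : ((p^3 : ℕ) : R) = 0 := ZMod.natCast_self _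
  have hc2 : ((p^2 : ℕ) : R) = (p : R)^2 := by push_cast; ring
  have hp4 : (p : R)^4 = 0 := by
    have h : (p:R)^4 = (p:R)^3 * (p:R) := by ring
    rw [h, hπ, zero_mul]
  rw [hc2] at ht
  have hterm1 : 2 * (p : R) * σ1 = 0 := by
    rw [ht]; linear_combination (2*t) * hπ
  have hterm2 : (p : R)^2 * (σ1^2 - Q) = 0 := by
    rw [ht, hs]
    linear_combination ((p:R)^3 * t^2 - s) * hπ
  have hP : ∏ k ∈ Ico 1 p, (1 + (p : R) * a k) = 1 := by
    have h2P : 2 * ∏ k ∈ Ico 1 p, (1 + (p : R) * a k) = 2 := by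
      rw [hmain]; linear_combination hterm1 + hterm2
    have hu2 : IsUnit ((2 : ℕ) : R) := unit_cast hp (by omega) (by omega) 3
    have hi := ZMod.inv_mul_of_unit _ hu2
    calc ∏ k ∈ Ico 1 p, (1 + (p : R) * a k)
        = (((2:ℕ):R)⁻¹ * ((2:ℕ):R)) * ∏ k ∈ Ico 1 p, (1 + (p : R) * a k) := by
          rw [hi, one_mul]
      _ = ((2:ℕ):R)⁻¹ * (2 * ∏ k ∈ Ico 1 p, (1 + (p : R) * a k)) := by push_cast; ring
      _ = 1 := by rw [h2P]; push_cast at hi ⊢; rw [hi]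
  -- conclude
  have hD : IsUnit (((p-1) ! : ℕ) : R) := by
    rw [ZMod.isUnit_iff_coprime]
    have : ¬ p ∣ (p-1) ! := by
      rw [Nat.Prime.dvd_factorial hp]; omega
    exact (Nat.coprime_comm.mp ((hp.coprime_iff_not_dvd).mpr this)).pow_right 3
  have hfinal : (C : R) = 1 := by
    have h1 : (C : R) * (((p-1) ! : ℕ) : R) = (((p-1) ! : ℕ) : R) := by
      rw [hcast, hNsplit, hP, mul_one]
    have hi := ZMod.mul_inv_of_unit _ hD
    calc (C : R) = (C : R) * ((((p-1) ! : ℕ) : R) * (((p-1) ! : ℕ) : R)⁻¹) := by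
          rw [hi, mul_one]
      _ = ((C : R) * (((p-1) ! : ℕ) : R)) * (((p-1) ! : ℕ) : R)⁻¹ := by ring
      _ = 1 := by rw [h1, hi]
  have := (ZMod.natCast_eq_natCast_iff C 1 (p^3)).mp (by rw [hfinal, Nat.cast_one])
  exact this
end

section
/- For every prime p ≥ 5, the harmonic number H_{p-1} = ∑_{k=1}^{p-1} 1/k, viewed as a rational number, has p-adic valuation at least 2; i.e., ∑_{k=1}^{p-1} 1/k ≡ 0 mod p^2 in ℤ_p. -/
open Finset

section helpers

lemma sum_range_eq_sum_zmod {n : ℕ} [NeZero n] {M : Type*} [AddCommMonoid M] (g : ZMod n → M) :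
    ∑ k ∈ Finset.range n, g (k : ZMod n) = ∑ x : ZMod n, g x := by
  refine Finset.sum_nbij' (fun k => (k : ZMod n)) (fun x => x.val) ?_ ?_ ?_ ?_ ?_
  · intros; exact Finset.mem_univ _
  · intro x _; exact Finset.mem_range.mpr x.val_lt
  · intro k hk; exact ZMod.val_cast_of_lt (Finset.mem_range.mp hk)
  · intro x _; exact ZMod.natCast_rightInverse x
  · intro x _; rfl

lemma sum_sq_eq_zero (p : ℕ) [hp : Fact p.Prime] (h5 : 5 ≤ p) :
    ∑ x : ZMod p, x ^ 2 = 0 := by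
  have h2 : (2 : ZMod p) ≠ 0 := by
    have : ((2 : ℕ) : ZMod p) ≠ 0 := by
      rw [Ne, ZMod.natCast_eq_zero_iff]
      intro h; have := Nat.le_of_dvd (by norm_num) h; omega
    simpa using this
  have h3 : (3 : ZMod p) ≠ 0 := by
    have : ((3 : ℕ) : ZMod p) ≠ 0 := by
      rw [Ne, ZMod.natCast_eq_zero_iff]
      intro h; have := Nat.le_of_dvd (by norm_num) h; omega
    simpa using this
  have key : ∑ x : ZMod p, (2 * x) ^ 2 = ∑ x : ZMod p, x ^ 2 :=
    Fintype.sum_bijective (fun x => 2 * x) (mulLeft_bijective₀ 2 h2)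
      (fun x => (2 * x) ^ 2) (fun x => x ^ 2) (fun x => rfl)
  have expand : ∑ x : ZMod p, (2 * x) ^ 2 = 4 * ∑ x : ZMod p, x ^ 2 := by
    rw [Finset.mul_sum]; congr 1; ext x; ring
  have h3' : 3 * ∑ x : ZMod p, x ^ 2 = 0 := by
    have := key.symm.trans expand
    linear_combination -this
  have := mul_eq_zero.mp h3'
  tauto

lemma sum_inv_sq_eq_zero (p : ℕ) [hp : Fact p.Prime] (h5 : 5 ≤ p) :
    ∑ x : ZMod p, (x⁻¹) ^ 2 = 0 := by
  have hinv : Function.Bijective (fun x : ZMod p => x⁻¹) :=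
    Function.Involutive.bijective (fun x => inv_inv x)
  have : ∑ x : ZMod p, (x⁻¹) ^ 2 = ∑ x : ZMod p, x ^ 2 :=
    Fintype.sum_bijective (fun x => x⁻¹) hinv (fun x => (x⁻¹) ^ 2) (fun x => x ^ 2)
      (fun x => rfl)
  rw [this]; exact sum_sq_eq_zero p h5

lemma sum_inv_kpk_zmod (p : ℕ) [hp : Fact p.Prime] (h5 : 5 ≤ p) :
    ∑ k ∈ Finset.Icc 1 (p - 1), ((k * (p - k) : ℕ) : ZMod p)⁻¹ = 0 := by
  have hterm : ∀ k ∈ Finset.Icc 1 (p - 1),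
      ((k * (p - k) : ℕ) : ZMod p)⁻¹ = -(((k : ZMod p))⁻¹) ^ 2 := by
    intro k hk
    rw [Finset.mem_Icc] at hk
    have hkp : k ≤ p := by omega
    have : ((k * (p - k) : ℕ) : ZMod p) = -((k : ZMod p)) ^ 2 := by
      push_cast [Nat.cast_sub hkp]
      rw [ZMod.natCast_self]
      ring
    rw [this, inv_neg, ← inv_pow]
  rw [Finset.sum_congr rfl hterm]
  have hrange : Finset.range p = insert 0 (Finset.Icc 1 (p - 1)) := by
    ext x; simp only [Finset.mem_range, Finset.mem_insert, Finset.mem_Icc]; omega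
  have h0 : (0 : ℕ) ∉ Finset.Icc 1 (p - 1) := by simp
  have : ∑ k ∈ Finset.Icc 1 (p - 1), (-(((k : ZMod p))⁻¹) ^ 2)
      = ∑ k ∈ Finset.range p, (-(((k : ZMod p))⁻¹) ^ 2) := by
    rw [hrange, Finset.sum_insert h0]
    simp
  rw [this, sum_range_eq_sum_zmod (fun x : ZMod p => -(x⁻¹) ^ 2)]
  rw [Finset.sum_neg_distrib]
  rw [sum_inv_sq_eq_zero p h5]
  simp

lemma isUnit_cast_sq (p : ℕ) [hp : Fact p.Prime] (k : ℕ) (hpk : ¬ p ∣ k) :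
    IsUnit ((k : ℕ) : ZMod (p ^ 2)) := by
  rw [ZMod.isUnit_iff_coprime]
  exact Nat.Coprime.pow_right 2
    (Nat.coprime_comm.mp ((Nat.Prime.coprime_iff_not_dvd hp.out).mpr hpk))

lemma not_dvd_of_lt (p k : ℕ) (h1 : 1 ≤ k) (h2 : k < p) : ¬ p ∣ k :=
  fun h => by have := Nat.le_of_dvd (by omega) h; omega

lemma harmonic_sum_zmod_sq (p : ℕ) [hp : Fact p.Prime] (h5 : 5 ≤ p) :
    ∑ k ∈ Finset.Icc 1 (p - 1), ((k : ℕ) : ZMod (p ^ 2))⁻¹ = 0 := by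
  set T := ∑ k ∈ Finset.Icc 1 (p - 1), ((k : ℕ) : ZMod (p ^ 2))⁻¹ with hT
  have hrefl : ∑ k ∈ Finset.Icc 1 (p - 1), (((p - k : ℕ)) : ZMod (p ^ 2))⁻¹ = T := by
    rw [hT]
    refine Finset.sum_nbij' (fun k => p - k) (fun k => p - k) ?_ ?_ ?_ ?_ ?_
    · intro k hk; simp only [Finset.mem_Icc] at hk ⊢; omega
    · intro k hk; simp only [Finset.mem_Icc] at hk ⊢; omega
    · intro k hk; simp only [Finset.mem_Icc] at hk; omega
    · intro k hk; simp only [Finset.mem_Icc] at hk; omega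
    · intro k hk; rfl
  have hpair : ∀ k ∈ Finset.Icc 1 (p - 1),
      ((k : ℕ) : ZMod (p ^ 2))⁻¹ + (((p - k : ℕ)) : ZMod (p ^ 2))⁻¹
        = ((p : ℕ) : ZMod (p ^ 2)) * (((k * (p - k) : ℕ)) : ZMod (p ^ 2))⁻¹ := by
    intro k hk
    rw [Finset.mem_Icc] at hk
    set a := ((k : ℕ) : ZMod (p ^ 2)) with ha'
    set b := (((p - k : ℕ)) : ZMod (p ^ 2)) with hb'
    have ha : IsUnit a := isUnit_cast_sq p k (not_dvd_of_lt p k hk.1 (by omega))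
    have hb : IsUnit b := isUnit_cast_sq p (p - k) (not_dvd_of_lt p (p - k) (by omega) (by omega))
    have hab : (((k * (p - k) : ℕ)) : ZMod (p ^ 2)) = a * b := by
      rw [ha', hb', Nat.cast_mul]
    have hinva : a⁻¹ = b * (a * b)⁻¹ := by
      apply ZMod.inv_eq_of_mul_eq_one
      rw [show a * (b * (a * b)⁻¹) = (a * b) * (a * b)⁻¹ by ring,
        ZMod.mul_inv_of_unit _ (ha.mul hb)]
    have hinvb : b⁻¹ = a * (a * b)⁻¹ := by
      apply ZMod.inv_eq_of_mul_eq_one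
      rw [show b * (a * (a * b)⁻¹) = (a * b) * (a * b)⁻¹ by ring,
        ZMod.mul_inv_of_unit _ (ha.mul hb)]
    have hsum : a + b = ((p : ℕ) : ZMod (p ^ 2)) := by
      rw [ha', hb', ← Nat.cast_add]
      congr 1; omega
    rw [hab, hinva, hinvb, ← hsum]; ring
  set U := ∑ k ∈ Finset.Icc 1 (p - 1), (((k * (p - k) : ℕ)) : ZMod (p ^ 2))⁻¹ with hU
  have h2T : 2 * T = ((p : ℕ) : ZMod (p ^ 2)) * U := by
    have step : 2 * T = ∑ k ∈ Finset.Icc 1 (p - 1),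
        (((k : ℕ) : ZMod (p ^ 2))⁻¹ + (((p - k : ℕ)) : ZMod (p ^ 2))⁻¹) := by
      rw [Finset.sum_add_distrib, hrefl, ← hT, two_mul]
    rw [step, Finset.sum_congr rfl hpair, ← Finset.mul_sum, ← hU]
  have hfU : (U.val : ZMod p) = 0 := by
    have hdvd : p ∣ p ^ 2 := dvd_pow_self p two_ne_zero
    set f := ZMod.castHom hdvd (ZMod p) with hf
    have hfU0 : f U = 0 := by
      rw [hU, map_sum]
      rw [← sum_inv_kpk_zmod p h5]
      refine Finset.sum_congr rfl ?_
      intro k hk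
      rw [Finset.mem_Icc] at hk
      have hnd : ¬ p ∣ k * (p - k) := by
        intro h
        rcases (Nat.Prime.dvd_mul hp.out).mp h with h' | h'
        · exact not_dvd_of_lt p k hk.1 (by omega) h'
        · exact not_dvd_of_lt p (p - k) (by omega) (by omega) h'
      have hu : IsUnit (((k * (p - k) : ℕ)) : ZMod (p ^ 2)) := isUnit_cast_sq p _ hnd
      have h1 : f (((k * (p - k) : ℕ) : ZMod (p ^ 2))) = (((k * (p - k) : ℕ)) : ZMod p) :=
        map_natCast f _
      have h2 : (((k * (p - k) : ℕ)) : ZMod p) * f ((((k * (p - k) : ℕ)) : ZMod (p ^ 2))⁻¹)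
          = 1 := by
        rw [← h1, ← map_mul, ZMod.mul_inv_of_unit _ hu, map_one]
      exact (inv_eq_of_mul_eq_one_right h2).symm
    rwa [hf, ZMod.castHom_apply, ← ZMod.natCast_val] at hfU0
  have hpU : ((p : ℕ) : ZMod (p ^ 2)) * U = 0 := by
    obtain ⟨v, hv⟩ := (ZMod.natCast_eq_zero_iff U.val p).mp hfU
    have hUU : ((U.val : ℕ) : ZMod (p ^ 2)) = U := ZMod.natCast_rightInverse U
    calc ((p : ℕ) : ZMod (p ^ 2)) * U
        = ((p : ℕ) : ZMod (p ^ 2)) * ((U.val : ℕ) : ZMod (p ^ 2)) := by rw [hUU]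
      _ = ((p * U.val : ℕ) : ZMod (p ^ 2)) := by rw [Nat.cast_mul]
      _ = ((p ^ 2 * v : ℕ) : ZMod (p ^ 2)) := by rw [hv]; congr 1; ring
      _ = 0 := by rw [Nat.cast_mul, ZMod.natCast_self, zero_mul]
  have h2T0 : (2 : ZMod (p ^ 2)) * T = (2 : ZMod (p ^ 2)) * 0 := by
    rw [h2T, hpU, mul_zero]
  have hu2 : IsUnit (2 : ZMod (p ^ 2)) := by
    have h := isUnit_cast_sq p 2 (not_dvd_of_lt p 2 (by omega) (by omega))
    simpa using h
  exact hu2.mul_left_cancel h2T0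

end helpers

theorem stmt_1 (p : ℕ) [Fact p.Prime] (h5 : 5 ≤ p) :
    ‖((∑ k ∈ Finset.Icc 1 (p - 1), (1 : ℚ) / k : ℚ) : ℚ_[p])‖ ≤ (p : ℝ) ^ (-2 : ℤ) := by
  have hp : p.Prime := Fact.out
  set S : ℚ := ∑ k ∈ Finset.Icc 1 (p - 1), (1 : ℚ) / k with hS
  set F : ℕ := (p - 1).factorial with hF
  set N : ℕ := ∑ k ∈ Finset.Icc 1 (p - 1), F / k with hN
  have hdvdk : ∀ k ∈ Finset.Icc 1 (p - 1), k ∣ F := by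
    intro k hk; rw [Finset.mem_Icc] at hk; exact Nat.dvd_factorial (by omega) hk.2
  have hNF : (N : ℚ) = F * S := by
    rw [hN, hS, Nat.cast_sum, Finset.mul_sum]
    refine Finset.sum_congr rfl ?_
    intro k hk
    have hk' := Finset.mem_Icc.mp hk
    rw [Nat.cast_div (hdvdk k hk) (by exact_mod_cast (by omega : k ≠ 0))]
    rw [div_eq_mul_one_div]
  have hdvdN : (p ^ 2 : ℕ) ∣ N := by
    rw [← ZMod.natCast_eq_zero_iff]
    rw [hN, Nat.cast_sum]
    have hterm : ∀ k ∈ Finset.Icc 1 (p - 1),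
        ((F / k : ℕ) : ZMod (p ^ 2)) = (F : ZMod (p ^ 2)) * ((k : ℕ) : ZMod (p ^ 2))⁻¹ := by
      intro k hk
      have hk' := Finset.mem_Icc.mp hk
      have hu : IsUnit ((k : ℕ) : ZMod (p ^ 2)) :=
        isUnit_cast_sq p k (not_dvd_of_lt p k hk'.1 (by omega))
      have hFk : ((F / k : ℕ) : ZMod (p ^ 2)) * ((k : ℕ) : ZMod (p ^ 2)) = (F : ZMod (p ^ 2)) := by
        rw [← Nat.cast_mul, Nat.div_mul_cancel (hdvdk k hk)]
      calc ((F / k : ℕ) : ZMod (p ^ 2))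
          = ((F / k : ℕ) : ZMod (p ^ 2)) * (((k : ℕ) : ZMod (p ^ 2)) * ((k : ℕ) : ZMod (p ^ 2))⁻¹) := by
            rw [ZMod.mul_inv_of_unit _ hu, mul_one]
        _ = (F : ZMod (p ^ 2)) * ((k : ℕ) : ZMod (p ^ 2))⁻¹ := by rw [← mul_assoc, hFk]
    rw [Finset.sum_congr rfl hterm, ← Finset.mul_sum, harmonic_sum_zmod_sq p h5, mul_zero]
  have hcast : ((N : ℕ) : ℚ_[p]) = ((F : ℕ) : ℚ_[p]) * ((S : ℚ) : ℚ_[p]) := by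
    have := congrArg (fun q : ℚ => (q : ℚ_[p])) hNF
    push_cast at this ⊢
    exact this
  have hnormN : ‖((N : ℕ) : ℚ_[p])‖ ≤ (p : ℝ) ^ (-2 : ℤ) := by
    have hd : ((p : ℤ) ^ 2) ∣ (N : ℤ) := by exact_mod_cast Int.natCast_dvd_natCast.mpr hdvdN
    have := (Padic.norm_int_le_pow_iff_dvd (N : ℤ) 2).mpr hd
    simpa using this
  have hnormF : ‖((F : ℕ) : ℚ_[p])‖ = 1 := by
    have hle : ‖((F : ℤ) : ℚ_[p])‖ ≤ 1 := Padic.norm_int_le_one _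
    have hnd : ¬ ((p : ℤ) ∣ (F : ℤ)) := by
      rw [Int.natCast_dvd_natCast, hF, Nat.Prime.dvd_factorial hp]
      omega
    have hlt := (Padic.norm_intCast_lt_one_iff : ‖((F : ℤ) : ℚ_[p])‖ < 1 ↔ _).not.mpr hnd
    have h1 : ‖((F : ℤ) : ℚ_[p])‖ = 1 := le_antisymm hle (not_lt.mp hlt)
    exact_mod_cast h1
  calc ‖((S : ℚ) : ℚ_[p])‖ = ‖((F : ℕ) : ℚ_[p])‖ * ‖((S : ℚ) : ℚ_[p])‖ := by
        rw [hnormF, one_mul]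
    _ = ‖((N : ℕ) : ℚ_[p])‖ := by rw [← norm_mul, ← hcast]
    _ ≤ _ := hnormN
end

section
/- Let p be a prime and let ε_p = 2 if p = 2, ε_p = 1 if p = 3, and ε_p = 0 if p ≥ 5. Then for all n ∈ ℕ, the sum ∑_{1 ≤ k ≤ n, p ∤ k} 1/k is divisible by p^{max(0, 2·ord_p(n) − ε_p)} in ℤ_p. -/
open Finset

section WB
variable {p : ℕ} [hp : Fact p.Prime]

private lemma wb_norm_nat_eq_one {k : ℕ} (hk : ¬ p ∣ k) : ‖(k : ℚ_[p])‖ = 1 := by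
  have h1 : ‖((k : ℤ) : ℚ_[p])‖ ≤ 1 := Padic.norm_int_le_one k
  have h2 : ¬ ‖((k : ℤ) : ℚ_[p])‖ < 1 := by
    rw [Padic.norm_intCast_lt_one_iff]
    exact_mod_cast hk
  push_cast at h1 h2
  linarith [lt_or_eq_of_le h1]

private lemma wb_norm_nat_le_pow {k t : ℕ} (h : p ^ t ∣ k) : ‖(k : ℚ_[p])‖ ≤ (p:ℝ) ^ (-(t:ℤ)) := by
  have := (Padic.norm_int_le_pow_iff_dvd (k : ℤ) t).mpr (by exact_mod_cast h)
  simpa using this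

private lemma wb_norm_int_le_pow {k : ℤ} {t : ℕ} (h : (p:ℤ) ^ t ∣ k) :
    ‖(k : ℚ_[p])‖ ≤ (p:ℝ) ^ (-(t:ℤ)) :=
  (Padic.norm_int_le_pow_iff_dvd k t).mpr h

private lemma wb_six_mul_sum_sq (N : ℕ) :
    6 * ∑ r ∈ Icc 1 N, (r:ℤ)^2 = N * (N+1) * (2*N+1) := by
  induction N with
  | zero => simp
  | succ n ih =>
    rw [Finset.sum_Icc_succ_top (by omega)]
    push_cast
    push_cast at ih
    ring_nf
    ring_nf at ih
    linarith

private lemma wb_sum_sq_multiples (p M : ℕ) (hp : 0 < p) :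
    ∑ r ∈ (Icc 1 (p*M)).filter (fun r => p ∣ r), (r:ℤ)^2
      = p^2 * ∑ j ∈ Icc 1 M, (j:ℤ)^2 := by
  rw [Finset.mul_sum]
  apply Finset.sum_nbij' (fun r => r / p) (fun j => p * j)
  · intro r hr
    simp only [mem_filter, mem_Icc] at hr ⊢
    obtain ⟨⟨h1, h2⟩, c, rfl⟩ := hr
    rw [Nat.mul_div_cancel_left _ hp]
    refine ⟨Nat.pos_of_ne_zero ?_, Nat.le_of_mul_le_mul_left h2 hp⟩
    rintro rfl; simp at h1
  · intro j hj
    simp only [mem_filter, mem_Icc] at hj ⊢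
    exact ⟨⟨Nat.mul_pos hp hj.1, Nat.mul_le_mul_left p hj.2⟩, Dvd.intro j rfl⟩
  · intro r hr
    simp only [mem_filter] at hr
    obtain ⟨-, c, rfl⟩ := hr
    rw [Nat.mul_div_cancel_left _ hp]
  · intro j hj
    rw [Nat.mul_div_cancel_left _ hp]
  · intro r hr
    simp only [mem_filter] at hr
    obtain ⟨-, c, rfl⟩ := hr
    rw [Nat.mul_div_cancel_left _ hp]
    push_cast; ring

private lemma wb_six_V (v : ℕ) (hv : 1 ≤ v) :
    6 * ∑ r ∈ (Icc 1 (p^v)).filter (fun r => ¬ p ∣ r), (r:ℤ)^2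
      = (p:ℤ)^v * ((p:ℤ)^v+1) * (2*(p:ℤ)^v+1)
        - (p:ℤ)^2 * ((p:ℤ)^(v-1) * ((p:ℤ)^(v-1)+1) * (2*(p:ℤ)^(v-1)+1)) := by
  have hsplit := Finset.sum_filter_add_sum_filter_not (Icc 1 (p^v)) (fun r => p ∣ r)
    (fun r => (r:ℤ)^2)
  have hNv : p^v = p * p^(v-1) := by
    conv_lhs => rw [show v = 1 + (v-1) by omega]
    rw [pow_add, pow_one]
  have hmul : ∑ r ∈ (Icc 1 (p^v)).filter (fun r => p ∣ r), (r:ℤ)^2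
      = p^2 * ∑ j ∈ Icc 1 (p^(v-1)), (j:ℤ)^2 := by
    rw [hNv]; exact_mod_cast wb_sum_sq_multiples p (p^(v-1)) hp.out.pos
  have h1 := wb_six_mul_sum_sq (p^v)
  have h2 := wb_six_mul_sum_sq (p^(v-1))
  push_cast at h1 h2 hmul ⊢
  nlinarith [hsplit, h1, h2, hmul]

private lemma wb_pow_dvd_V (v : ℕ) (hv : 1 ≤ v) :
    (p:ℤ)^(v-1) ∣ ∑ r ∈ (Icc 1 (p^v)).filter (fun r => ¬ p ∣ r), (r:ℤ)^2
    ∧ (5 ≤ p → (p:ℤ)^v ∣ ∑ r ∈ (Icc 1 (p^v)).filter (fun r => ¬ p ∣ r), (r:ℤ)^2) := by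
  have hp2 := hp.out.two_le
  set V := ∑ r ∈ (Icc 1 (p^v)).filter (fun r => ¬ p ∣ r), (r:ℤ)^2 with hV
  have h6 : (p:ℤ)^v ∣ 6 * V := by
    rw [wb_six_V v hv]
    apply dvd_sub
    · exact Dvd.dvd.mul_right (Dvd.dvd.mul_right dvd_rfl _) _
    · have h1 : (p:ℤ)^v ∣ (p:ℤ)^2 * (p:ℤ)^(v-1) := by
        rw [← pow_add]; exact pow_dvd_pow _ (by omega)
      have h2 : (p:ℤ)^2 * ((p:ℤ)^(v-1) * ((p:ℤ)^(v-1)+1) * (2*(p:ℤ)^(v-1)+1))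
          = ((p:ℤ)^2 * (p:ℤ)^(v-1)) * ((((p:ℤ)^(v-1)+1)) * (2*(p:ℤ)^(v-1)+1)) := by ring
      rw [h2]
      exact h1.mul_right _
  have hbig : 5 ≤ p → (p:ℤ)^v ∣ V := by
    intro h5
    have hcop : IsCoprime ((p:ℤ)^v) 6 := by
      apply IsCoprime.pow_left
      rw [Int.isCoprime_iff_gcd_eq_one]
      have hnd : ¬ (p ∣ 6) := by
        intro h
        have hle := Nat.le_of_dvd (by norm_num) h
        interval_cases p
        · revert h; decide
        · exact absurd hp.out (by norm_num)
      have : Nat.Coprime p 6 := (Nat.Prime.coprime_iff_not_dvd hp.out).mpr hnd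
      simpa [Int.gcd] using this
    exact hcop.dvd_of_dvd_mul_left h6
  refine ⟨?_, hbig⟩
  rcases Nat.lt_or_ge p 5 with h5 | h5
  · interval_cases p
    · have h2 : (2:ℤ)^v ∣ 2 * (3 * V) := by convert h6 using 1 <;> ring
      rw [show (2:ℤ)^v = 2 * 2^(v-1) by rw [← pow_succ']; congr 1; omega] at h2
      have h3 : (2:ℤ)^(v-1) ∣ 3 * V :=
        (mul_dvd_mul_iff_left (a := (2:ℤ)) (by norm_num)).mp h2
      exact IsCoprime.dvd_of_dvd_mul_left
        (IsCoprime.pow_left (by norm_num)) h3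
    · have h2 : (3:ℤ)^v ∣ 3 * (2 * V) := by convert h6 using 1 <;> ring
      rw [show (3:ℤ)^v = 3 * 3^(v-1) by rw [← pow_succ']; congr 1; omega] at h2
      have h3 : (3:ℤ)^(v-1) ∣ 2 * V :=
        (mul_dvd_mul_iff_left (a := (3:ℤ)) (by norm_num)).mp h2
      exact IsCoprime.dvd_of_dvd_mul_left
        (IsCoprime.pow_left (by norm_num)) h3
    · exact absurd hp.out (by norm_num)
  · exact (pow_dvd_pow _ (by omega : v - 1 ≤ v)).trans (hbig h5)

noncomputable def wbinv (N k : ℕ) : ℕ := ((k : ZMod N)⁻¹).val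

lemma wb_isUnit_cast {v k : ℕ} (hk : ¬ p ∣ k) : IsUnit (k : ZMod (p^v)) := by
  rw [ZMod.isUnit_iff_coprime]
  exact Nat.Coprime.pow_right _ ((Nat.Prime.coprime_iff_not_dvd hp.out).mpr hk).symm

lemma wb_two_le_pow {v : ℕ} (hv : 1 ≤ v) : 2 ≤ p^v :=
  calc 2 ≤ p := hp.out.two_le
  _ = p^1 := (pow_one p).symm
  _ ≤ p^v := Nat.pow_le_pow_right (by have := hp.out.two_le; omega) hv

lemma wb_binv_coprime {v k : ℕ} (hv : 1 ≤ v) (hk : ¬ p ∣ k) :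
    ¬ p ∣ wbinv (p^v) k ∧ 1 ≤ wbinv (p^v) k := by
  have hu := wb_isUnit_cast (v := v) hk
  have hcop : Nat.Coprime (wbinv (p^v) k) (p^v) := by
    obtain ⟨u, hu'⟩ := hu
    rw [wbinv, ← hu', ZMod.inv_coe_unit]
    exact ZMod.val_coe_unit_coprime _
  constructor
  · intro hdvd
    have h1 : p ∣ p^v := dvd_pow_self p (by omega)
    have h2 := Nat.dvd_gcd hdvd h1
    rw [hcop] at h2
    have := hp.out.two_le
    have := Nat.le_of_dvd one_pos h2
    omega
  · rcases Nat.eq_zero_or_pos (wbinv (p^v) k) with h0 | h; swap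
    · exact h
    · exfalso
      rw [h0] at hcop
      have h1 : p^v = 1 := by simpa [Nat.Coprime] using hcop
      have := wb_two_le_pow (p := p) hv
      omega

lemma wb_binv_lt {v k : ℕ} : wbinv (p^v) k < p^v := by
  have : NeZero (p^v) := ⟨(pow_pos hp.out.pos v).ne'⟩
  exact ZMod.val_lt _

lemma wb_cast_binv {v k : ℕ} : ((wbinv (p^v) k : ℕ) : ZMod (p^v)) = (k : ZMod (p^v))⁻¹ := by
  have : NeZero (p^v) := ⟨(pow_pos hp.out.pos v).ne'⟩
  exact ZMod.natCast_rightInverse _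

lemma wb_cast_mul_binv {v k : ℕ} (hk : ¬ p ∣ k) :
    ((k * wbinv (p^v) k : ℕ) : ZMod (p^v)) = 1 := by
  push_cast
  rw [wb_cast_binv]
  exact ZMod.mul_inv_of_unit _ (wb_isUnit_cast hk)

lemma wb_mul_binv_dvd {v k : ℕ} (hk : ¬ p ∣ k) :
    (p:ℤ)^v ∣ 1 - ((k * wbinv (p^v) k : ℕ) : ℤ)^2 := by
  have h1 : ((1 - ((k * wbinv (p^v) k : ℕ) : ℤ)^2 : ℤ) : ZMod (p^v)) = 0 := by
    push_cast
    rw [show (((k : ℕ) : ZMod (p^v)) * ((wbinv (p^v) k : ℕ) : ZMod (p^v))) =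
      (((k * wbinv (p^v) k : ℕ) : ℕ) : ZMod (p^v)) by push_cast; ring]
    rw [wb_cast_mul_binv hk]
    ring
  have := (ZMod.intCast_zmod_eq_zero_iff_dvd _ (p^v)).mp h1
  exact_mod_cast this

lemma wb_binv_binv {v k : ℕ} (hk : ¬ p ∣ k) (hlt : k < p^v) :
    wbinv (p^v) (wbinv (p^v) k) = k := by
  have hu := wb_isUnit_cast (v := v) hk
  rw [wbinv, wb_cast_binv]
  have hinv : ((k : ZMod (p^v))⁻¹)⁻¹ = (k : ZMod (p^v)) := by
    obtain ⟨u, hu'⟩ := hu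
    rw [← hu', ZMod.inv_coe_unit, ZMod.inv_coe_unit, inv_inv]
  rw [hinv, ZMod.val_cast_of_lt hlt]

lemma wb_binv_add_mul {v k j : ℕ} : wbinv (p^v) (p^v * j + k) = wbinv (p^v) k := by
  unfold wbinv
  congr 2
  push_cast
  rw [← Nat.cast_pow, ZMod.natCast_self, zero_mul, zero_add]

def wd (p v : ℕ) : ℕ := if 5 ≤ p then v else v - 1

lemma wb_approx {v k : ℕ} (hk0 : k ≠ 0) (hk : ¬ p ∣ k) :
    ‖(1 / (k:ℚ_[p])^2 - ((wbinv (p^v) k : ℕ) : ℚ_[p])^2)‖ ≤ (p:ℝ)^(-(v:ℤ)) := by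
  have hk' : (k:ℚ_[p]) ≠ 0 := Nat.cast_ne_zero.mpr hk0
  have key : 1 / (k:ℚ_[p])^2 - ((wbinv (p^v) k : ℕ) : ℚ_[p])^2
      = ((1 - ((k * wbinv (p^v) k : ℕ) : ℤ)^2 : ℤ) : ℚ_[p]) / (k:ℚ_[p])^2 := by
    push_cast
    field_simp
  rw [key, norm_div, norm_pow, wb_norm_nat_eq_one hk, one_pow, div_one]
  exact wb_norm_int_le_pow (wb_mul_binv_dvd hk)

lemma wb_sum_binv_sq (v : ℕ) (hv : 1 ≤ v) :
    ∑ r ∈ (Icc 1 (p^v)).filter (fun r => ¬ p ∣ r), ((wbinv (p^v) r : ℕ):ℤ)^2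
      = ∑ r ∈ (Icc 1 (p^v)).filter (fun r => ¬ p ∣ r), (r:ℤ)^2 := by
  apply Finset.sum_nbij' (fun r => wbinv (p^v) r) (fun r => wbinv (p^v) r)
  · intro r hr
    simp only [mem_filter, mem_Icc] at hr ⊢
    obtain ⟨⟨h1, h2⟩, hnd⟩ := hr
    obtain ⟨hnd', hge⟩ := wb_binv_coprime hv hnd
    exact ⟨⟨hge, (wb_binv_lt (k := r)).le⟩, hnd'⟩
  · intro r hr
    simp only [mem_filter, mem_Icc] at hr ⊢
    obtain ⟨⟨h1, h2⟩, hnd⟩ := hr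
    obtain ⟨hnd', hge⟩ := wb_binv_coprime hv hnd
    exact ⟨⟨hge, (wb_binv_lt (k := r)).le⟩, hnd'⟩
  · intro r hr
    simp only [mem_filter, mem_Icc] at hr
    obtain ⟨⟨h1, h2⟩, hnd⟩ := hr
    have hlt : r < p^v := by
      rcases Nat.lt_or_ge r (p^v) with h | h
      · exact h
      · exfalso; exact hnd (by rw [show r = p^v by omega]; exact dvd_pow_self p (by omega))
    exact wb_binv_binv hnd hlt
  · intro r hr
    simp only [mem_filter, mem_Icc] at hr
    obtain ⟨⟨h1, h2⟩, hnd⟩ := hr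
    have hlt : r < p^v := by
      rcases Nat.lt_or_ge r (p^v) with h | h
      · exact h
      · exfalso; exact hnd (by rw [show r = p^v by omega]; exact dvd_pow_self p (by omega))
    exact wb_binv_binv hnd hlt
  · intro r hr
    rfl

lemma wb_wd_le {v : ℕ} : wd p v ≤ v := by
  unfold wd; split <;> omega

lemma wb_pow_dvd_V' (v : ℕ) (hv : 1 ≤ v) :
    (p:ℤ)^(wd p v) ∣ ∑ r ∈ (Icc 1 (p^v)).filter (fun r => ¬ p ∣ r), (r:ℤ)^2 := by
  by_cases h : 5 ≤ p
  · rw [wd, if_pos h]; exact (wb_pow_dvd_V v hv).2 h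
  · rw [wd, if_neg h]; exact (wb_pow_dvd_V v hv).1

lemma wb_one_le_p : (1:ℝ) ≤ (p:ℝ) := by
  exact_mod_cast hp.out.one_lt.le

lemma wb_rhs_mono {a b : ℤ} (hab : a ≤ b) : (p:ℝ)^(-(b:ℤ)) ≤ (p:ℝ)^(-(a:ℤ)) :=
  zpow_le_zpow_right₀ wb_one_le_p (by omega)

lemma wb_block (v : ℕ) (hv : 1 ≤ v) (j : ℕ) :
    ‖∑ k ∈ (Icc (p^v*j+1) (p^v*j+p^v)).filter (fun k => ¬ p ∣ k), (1 / (k:ℚ_[p])^2)‖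
      ≤ (p:ℝ)^(-(wd p v : ℤ)) := by
  have hpv : 1 ≤ p^v := Nat.one_le_pow _ _ hp.out.pos
  have hdvdN : p ∣ p^v := dvd_pow_self p (by omega)
  -- reindex
  have hre : ∑ k ∈ (Icc (p^v*j+1) (p^v*j+p^v)).filter (fun k => ¬ p ∣ k), (1 / (k:ℚ_[p])^2)
      = ∑ r ∈ (Icc 1 (p^v)).filter (fun r => ¬ p ∣ r), (1 / (((p^v*j+r : ℕ)):ℚ_[p])^2) := by
    symm
    apply Finset.sum_nbij' (fun r => p^v*j + r) (fun k => k - p^v*j)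
    · intro r hr
      simp only [mem_filter, mem_Icc] at hr ⊢
      refine ⟨⟨by omega, by omega⟩, ?_⟩
      intro hd
      exact hr.2 ((Nat.dvd_add_right (hdvdN.mul_right j)).mp hd)
    · intro k hk
      simp only [mem_filter, mem_Icc] at hk ⊢
      refine ⟨⟨by omega, by omega⟩, ?_⟩
      intro hd
      apply hk.2
      have : k = p^v*j + (k - p^v*j) := by omega
      rw [this]
      exact Nat.dvd_add (hdvdN.mul_right j) hd
    · intro r hr; omega
    · intro k hk
      simp only [mem_filter, mem_Icc] at hk
      omega
    · intro r hr
      rfl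
  rw [hre]
  -- decompose
  have hdecomp : ∑ r ∈ (Icc 1 (p^v)).filter (fun r => ¬ p ∣ r), (1 / (((p^v*j+r : ℕ)):ℚ_[p])^2)
      = (∑ r ∈ (Icc 1 (p^v)).filter (fun r => ¬ p ∣ r),
          (1 / (((p^v*j+r : ℕ)):ℚ_[p])^2 - ((wbinv (p^v) r : ℕ) : ℚ_[p])^2))
        + ∑ r ∈ (Icc 1 (p^v)).filter (fun r => ¬ p ∣ r), ((wbinv (p^v) r : ℕ) : ℚ_[p])^2 := by
    rw [← Finset.sum_add_distrib]
    apply Finset.sum_congr rfl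
    intro r hr
    ring
  rw [hdecomp]
  refine le_trans (IsUltrametricDist.norm_add_le_max _ _) (max_le ?_ ?_)
  · refine le_trans (IsUltrametricDist.norm_sum_le_of_forall_le_of_nonneg (by positivity) ?_)
      (wb_rhs_mono (a := (wd p v : ℤ)) (b := (v:ℤ)) (by exact_mod_cast (wb_wd_le (p := p) (v := v))))
    intro r hr
    simp only [mem_filter, mem_Icc] at hr
    have hnd : ¬ p ∣ (p^v*j + r) := by
      intro hd
      exact hr.2 ((Nat.dvd_add_right (hdvdN.mul_right j)).mp hd)
    have := wb_approx (v := v) (k := p^v*j + r) (by omega) hnd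
    rwa [wb_binv_add_mul] at this
  · have hcast : ∑ r ∈ (Icc 1 (p^v)).filter (fun r => ¬ p ∣ r), ((wbinv (p^v) r : ℕ) : ℚ_[p])^2
        = (((∑ r ∈ (Icc 1 (p^v)).filter (fun r => ¬ p ∣ r), ((wbinv (p^v) r : ℕ):ℤ)^2 : ℤ)) : ℚ_[p]) := by
      push_cast
      try rfl
    rw [hcast, wb_sum_binv_sq v hv]
    exact wb_norm_int_le_pow (wb_pow_dvd_V' v hv)

lemma wb_Q (v : ℕ) (hv : 1 ≤ v) (m : ℕ) :
    ‖∑ k ∈ (Icc 1 (p^v*m)).filter (fun k => ¬ p ∣ k), (1 / (k:ℚ_[p])^2)‖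
      ≤ (p:ℝ)^(-(wd p v : ℤ)) := by
  induction m with
  | zero =>
    have he : ((Icc 1 (p^v*0)).filter (fun k => ¬ p ∣ k)) = ∅ := by simp
    rw [he, Finset.sum_empty, norm_zero]
    positivity
  | succ m ih =>
    have hsplit : Icc 1 (p^v*(m+1)) = Icc 1 (p^v*m) ∪ Icc (p^v*m+1) (p^v*m+p^v) := by
      ext x
      simp only [mem_Icc, mem_union]
      have : p^v*(m+1) = p^v*m + p^v := by ring
      omega
    have hdisj : Disjoint ((Icc 1 (p^v*m)).filter (fun k => ¬ p ∣ k))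
        ((Icc (p^v*m+1) (p^v*m+p^v)).filter (fun k => ¬ p ∣ k)) := by
      rw [Finset.disjoint_left]
      intro a ha hb
      simp only [mem_filter, mem_Icc] at ha hb
      omega
    rw [hsplit, Finset.filter_union, Finset.sum_union hdisj]
    exact le_trans (IsUltrametricDist.norm_add_le_max _ _)
      (max_le ih (wb_block v hv m))

lemma wb_pair (n : ℕ) (hdvd : p ∣ n) :
    ∑ k ∈ (Icc 1 n).filter (fun k => ¬ p ∣ k), (1 / (k:ℚ_[p]))
      = ∑ k ∈ (Icc 1 n).filter (fun k => ¬ p ∣ k), (1 / (((n - k : ℕ)):ℚ_[p])) := by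
  apply Finset.sum_nbij' (fun k => n - k) (fun k => n - k)
  · intro k hk
    simp only [mem_filter, mem_Icc] at hk ⊢
    obtain ⟨⟨h1, h2⟩, hnd⟩ := hk
    have hkn : k ≠ n := by rintro rfl; exact hnd hdvd
    refine ⟨⟨by omega, by omega⟩, ?_⟩
    intro hd
    exact hnd (by have := Nat.dvd_sub hdvd hd; rwa [show n - (n - k) = k by omega] at this)
  · intro k hk
    simp only [mem_filter, mem_Icc] at hk ⊢
    obtain ⟨⟨h1, h2⟩, hnd⟩ := hk
    have hkn : k ≠ n := by rintro rfl; exact hnd hdvd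
    refine ⟨⟨by omega, by omega⟩, ?_⟩
    intro hd
    exact hnd (by have := Nat.dvd_sub hdvd hd; rwa [show n - (n - k) = k by omega] at this)
  · intro k hk
    simp only [mem_filter, mem_Icc] at hk
    omega
  · intro k hk
    simp only [mem_filter, mem_Icc] at hk
    omega
  · intro k hk
    simp only [mem_filter, mem_Icc] at hk
    congr 2
    omega

end WB

theorem stmt_2 (p : ℕ) [Fact p.Prime] (n : ℕ) (hn : 0 < n) :
    ‖((∑ k ∈ (Finset.Icc 1 n).filter (fun k => ¬ p ∣ k), (1 : ℚ) / k : ℚ) : ℚ_[p])‖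
      ≤ (p : ℝ) ^ (-(max 0 (2 * (padicValNat p n : ℤ) -
          (if p = 2 then 2 else if p = 3 then 1 else 0)))) := by
  have hp : Fact p.Prime := inferInstance
  have hp2 := hp.out.two_le
  set A := (Finset.Icc 1 n).filter (fun k => ¬ p ∣ k) with hA
  have hcast : ((∑ k ∈ A, (1 : ℚ) / k : ℚ) : ℚ_[p]) = ∑ k ∈ A, (1 / (k:ℚ_[p])) := by
    push_cast
    rfl
  rw [hcast]
  set S := ∑ k ∈ A, (1 / (k:ℚ_[p])) with hS
  by_cases hdvd : p ∣ n
  swap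
  · -- trivial case : padicValNat = 0
    have hv0 : padicValNat p n = 0 := padicValNat.eq_zero_of_not_dvd hdvd
    have hmax : max 0 (2 * ((padicValNat p n : ℤ)) -
        (if p = 2 then 2 else if p = 3 then 1 else 0)) = 0 := by
      rw [hv0]
      split_ifs <;> simp
    rw [hmax]
    simp only [neg_zero, zpow_zero]
    apply IsUltrametricDist.norm_sum_le_of_forall_le_of_nonneg zero_le_one
    intro k hk
    simp only [hA, mem_filter, mem_Icc] at hk
    rw [one_div, norm_inv, wb_norm_nat_eq_one hk.2, inv_one]
  · -- main case
    set v := padicValNat p n with hv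
    have hv1 : 1 ≤ v := one_le_padicValNat_of_dvd hn.ne' hdvd
    have hpvn : p ^ v ∣ n := pow_padicValNat_dvd
    set m := n / p^v with hm
    have hnm : p^v * m = n := Nat.mul_div_cancel' hpvn
    have hSpair' : ∑ k ∈ A, (1/(k:ℚ_[p])) = ∑ k ∈ A, (1/(((n-k:ℕ)):ℚ_[p])) := by
      rw [hA]; exact wb_pair n hdvd
    set Q := ∑ k ∈ A, (1/(k:ℚ_[p])^2) with hQdef
    set R := ∑ k ∈ A, (1/((k:ℚ_[p])^2 * (((n-k:ℕ)):ℚ_[p]))) with hRdef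
    have hterm : ∀ k ∈ A, (1/(k:ℚ_[p]) + 1/(((n-k:ℕ)):ℚ_[p]))
        = (n:ℚ_[p]) * (-(1/(k:ℚ_[p])^2) + (n:ℚ_[p]) * (1/((k:ℚ_[p])^2 * (((n-k:ℕ)):ℚ_[p])))) := by
      intro k hk
      simp only [hA, mem_filter, mem_Icc] at hk
      obtain ⟨⟨h1, h2⟩, hnd⟩ := hk
      have hkn : k ≠ n := by rintro rfl; exact hnd hdvd
      have hx : (k:ℚ_[p]) ≠ 0 := Nat.cast_ne_zero.mpr (by omega)
      have hy : (((n-k:ℕ)):ℚ_[p]) ≠ 0 := Nat.cast_ne_zero.mpr (by omega)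
      have hxy : (n:ℚ_[p]) = (k:ℚ_[p]) + (((n-k:ℕ)):ℚ_[p]) := by
        rw [← Nat.cast_add]
        congr 1
        omega
      rw [Nat.cast_sub h2] at hy ⊢
      have hxy' : (n:ℚ_[p]) = (k:ℚ_[p]) + ((n:ℚ_[p]) - (k:ℚ_[p])) := by ring
      field_simp
      ring
    have h2S : S + S = (n:ℚ_[p]) * (-Q + (n:ℚ_[p]) * R) := by
      have e1 : S + S = ∑ k ∈ A, (1/(k:ℚ_[p]) + 1/(((n-k:ℕ)):ℚ_[p])) := by
        rw [Finset.sum_add_distrib, ← hSpair', ← hS]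
      rw [e1, Finset.sum_congr rfl hterm, ← Finset.mul_sum]
      congr 1
      rw [Finset.sum_add_distrib, ← Finset.mul_sum, Finset.sum_neg_distrib, ← hQdef, ← hRdef]
    have hQ : ‖Q‖ ≤ (p:ℝ)^(-(wd p v:ℤ)) := by
      rw [hQdef, hA, ← hnm]
      exact wb_Q v hv1 m
    have hR : ‖R‖ ≤ 1 := by
      apply IsUltrametricDist.norm_sum_le_of_forall_le_of_nonneg zero_le_one
      intro k hk
      simp only [hA, mem_filter, mem_Icc] at hk
      obtain ⟨⟨h1, h2⟩, hnd⟩ := hk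
      have hkn : k ≠ n := by rintro rfl; exact hnd hdvd
      have hnd2 : ¬ p ∣ (n - k) := by
        intro hd
        exact hnd (by have := Nat.dvd_sub hdvd hd; rwa [show n - (n - k) = k by omega] at this)
      rw [one_div, norm_inv, norm_mul, norm_pow, wb_norm_nat_eq_one hnd,
        wb_norm_nat_eq_one hnd2, one_pow, one_mul, inv_one]
    have hnle : ‖(n:ℚ_[p])‖ ≤ (p:ℝ)^(-(v:ℤ)) := wb_norm_nat_le_pow hpvn
    have hnR : ‖(n:ℚ_[p]) * R‖ ≤ (p:ℝ)^(-(wd p v:ℤ)) := by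
      rw [norm_mul]
      calc ‖(n:ℚ_[p])‖ * ‖R‖ ≤ (p:ℝ)^(-(v:ℤ)) * 1 :=
        mul_le_mul hnle hR (norm_nonneg _) (by positivity)
      _ = (p:ℝ)^(-(v:ℤ)) := mul_one _
      _ ≤ (p:ℝ)^(-(wd p v:ℤ)) := wb_rhs_mono (by exact_mod_cast wb_wd_le (p := p) (v := v))
    have hinner : ‖-Q + (n:ℚ_[p])*R‖ ≤ (p:ℝ)^(-(wd p v:ℤ)) := by
      refine le_trans (IsUltrametricDist.norm_add_le_max _ _) (max_le ?_ hnR)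
      rwa [norm_neg]
    have hSS : ‖S + S‖ ≤ (p:ℝ)^(-(v:ℤ)) * (p:ℝ)^(-(wd p v:ℤ)) := by
      rw [h2S, norm_mul]
      exact mul_le_mul hnle hinner (norm_nonneg _) (by positivity)
    set c : ℤ := if p = 2 then 1 else 0 with hc
    have h2norm : ‖(2:ℚ_[p])‖ = (p:ℝ)^(-c) := by
      by_cases h2 : p = 2
      · subst h2
        rw [hc, if_pos rfl]
        rw [show (2:ℚ_[2]) = ((2:ℕ):ℚ_[2]) by norm_num]
        rw [show ((2:ℕ):ℚ_[2]) = ((2:ℕ):ℚ_[2]) from rfl]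
        have := Padic.norm_p (p := 2)
        simp only [Nat.cast_ofNat] at this ⊢
        rw [this]
        norm_num
      · rw [hc, if_neg h2, neg_zero, zpow_zero]
        have hnd : ¬ p ∣ 2 := by
          intro hd
          have := Nat.le_of_dvd (by norm_num) hd
          interval_cases p
          · exact h2 rfl
        rw [show (2:ℚ_[p]) = ((2:ℕ):ℚ_[p]) by norm_num]
        exact wb_norm_nat_eq_one hnd
    have hSnorm : ‖S‖ ≤ (p:ℝ)^(c - (v:ℤ) - (wd p v:ℤ)) := by
      have hSS2 : ‖(2:ℚ_[p]) * S‖ ≤ (p:ℝ)^(-(v:ℤ)) * (p:ℝ)^(-(wd p v:ℤ)) := by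
        rwa [two_mul]
      rw [norm_mul, h2norm] at hSS2
      have hpne : (p:ℝ) ≠ 0 := by positivity
      have hid : ‖S‖ = (p:ℝ)^c * ((p:ℝ)^(-c) * ‖S‖) := by
        rw [← mul_assoc, ← zpow_add₀ hpne]
        simp
      rw [hid]
      calc (p:ℝ)^c * ((p:ℝ)^(-c) * ‖S‖) ≤ (p:ℝ)^c * ((p:ℝ)^(-(v:ℤ)) * (p:ℝ)^(-(wd p v:ℤ))) :=
        mul_le_mul_of_nonneg_left hSS2 (by positivity)
      _ = (p:ℝ)^(c - (v:ℤ) - (wd p v:ℤ)) := by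
        rw [← zpow_add₀ hpne, ← zpow_add₀ hpne]
        congr 1
        ring
    refine hSnorm.trans (zpow_le_zpow_right₀ wb_one_le_p ?_)
    have h4 : p ≠ 4 := by
      intro h
      rw [h] at hp
      exact absurd hp.out (by norm_num)
    by_cases hq2 : p = 2
    · subst hq2
      rw [hc]
      simp only [if_pos rfl, wd]
      norm_num
      omega
    · by_cases hq3 : p = 3
      · subst hq3
        rw [hc]
        simp only [wd]
        norm_num
        omega
      · have h5 : 5 ≤ p := by omega
        rw [hc]
        rw [if_neg hq2]
        simp only [wd, if_pos h5, if_neg hq2, if_neg hq3]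
        omega
end

section
/- Let p be a prime and let ε_p = 2 if p = 2, ε_p = 1 if p = 3, ε_p = 0 if p ≥ 5. Then for all n ∈ ℕ, the sum ∑_{1 ≤ k ≤ n, p ∤ k} 1/k² is divisible by p^{max(0, ord_p(n) − ε_p + δ_{p,2})} in ℤ_p, where δ_{p,2} = 1 if p = 2 and 0 otherwise. -/
open Finset

private lemma six_mul_sum_sq (n : ℕ) :
    6 * ∑ i ∈ Finset.Icc 1 n, (i : ℤ)^2 = n * (n+1) * (2*n+1) := by
  induction n with
  | zero => simp
  | succ n ih =>
    rw [Finset.sum_Icc_succ_top (by omega : 1 ≤ n+1)]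
    push_cast
    push_cast at ih
    linear_combination ih

private lemma filter_dvd_eq_image (p q' : ℕ) (hp : 0 < p) :
    (Finset.Icc 1 (p * q')).filter (fun r => p ∣ r) = (Finset.Icc 1 q').image (fun s => p * s) := by
  ext r
  simp only [Finset.mem_filter, Finset.mem_Icc, Finset.mem_image]
  constructor
  · rintro ⟨⟨h1, h2⟩, s, rfl⟩
    refine ⟨s, ⟨?_, ?_⟩, rfl⟩
    · rcases Nat.eq_zero_or_pos s with rfl | h
      · simp at h1
      · exact h
    · exact Nat.le_of_mul_le_mul_left h2 hp
  · rintro ⟨s, ⟨hs1, hs2⟩, rfl⟩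
    exact ⟨⟨Nat.one_le_iff_ne_zero.2 (by positivity), Nat.mul_le_mul_left _ hs2⟩, ⟨s, rfl⟩⟩

private lemma six_mul_D (p : ℕ) (hp : 2 ≤ p) (v : ℕ) (hv : 1 ≤ v) :
    6 * ∑ r ∈ (Finset.Icc 1 (p^v)).filter (fun r => ¬ p ∣ r), (r:ℤ)^2
      = (p:ℤ)^v * (p-1) * (2 * (p:ℤ)^(2*v-1) - 1) := by
  obtain ⟨w, rfl⟩ : ∃ w, v = w + 1 := ⟨v - 1, by omega⟩
  have hq : p ^ (w+1) = p * p ^ w := by ring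
  have hsplit := Finset.sum_filter_add_sum_filter_not (Finset.Icc 1 (p^(w+1)))
    (fun r => p ∣ r) (fun r => (r:ℤ)^2)
  have himg : ∑ r ∈ (Finset.Icc 1 (p^(w+1))).filter (fun r => p ∣ r), (r:ℤ)^2
      = (p:ℤ)^2 * ∑ s ∈ Finset.Icc 1 (p^w), (s:ℤ)^2 := by
    rw [hq, filter_dvd_eq_image p (p^w) (by omega),
      Finset.sum_image (fun a _ b _ h => Nat.eq_of_mul_eq_mul_left (by omega) h)]
    rw [Finset.mul_sum]
    apply Finset.sum_congr rfl
    intros; push_cast; ring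
  have h1 := six_mul_sum_sq (p^(w+1))
  have h2 := six_mul_sum_sq (p^w)
  have hD : ∑ r ∈ (Finset.Icc 1 (p^(w+1))).filter (fun r => ¬ p ∣ r), (r:ℤ)^2
      = (∑ i ∈ Finset.Icc 1 (p^(w+1)), (i:ℤ)^2) - (p:ℤ)^2 * ∑ s ∈ Finset.Icc 1 (p^w), (s:ℤ)^2 := by
    rw [← himg]; linarith [hsplit]
  rw [hD]
  have e1 : ((p:ℤ))^(w+1) = (p:ℤ)^w * p := by ring
  have e2 : ((p:ℤ))^(2*(w+1)-1) = ((p:ℤ)^w)^2 * p := by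
    have h : 2*(w+1)-1 = w + w + 1 := by omega
    rw [h]; ring
  push_cast at h1 h2
  rw [e1, e2]
  linear_combination h1 - (p:ℤ)^2 * h2
private lemma dvd_D (p : ℕ) [hp : Fact p.Prime] (v : ℕ) (hv : 1 ≤ v) :
    (p:ℤ) ^ (v - (if p = 2 ∨ p = 3 then 1 else 0)) ∣
      ∑ r ∈ (Finset.Icc 1 (p^v)).filter (fun r => ¬ p ∣ r), (r:ℤ)^2 := by
  have hp2 : 2 ≤ p := hp.out.two_le
  obtain ⟨u, rfl⟩ : ∃ u, v = u + 1 := ⟨v - 1, by omega⟩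
  set D : ℤ := ∑ r ∈ (Finset.Icc 1 (p^(u+1))).filter (fun r => ¬ p ∣ r), (r:ℤ)^2 with hD
  have h6 := six_mul_D p hp2 (u+1) (by omega)
  rw [← hD] at h6
  by_cases h2 : p = 2
  · subst h2
    simp only [if_pos (by norm_num : (2:ℕ) = 2 ∨ (2:ℕ) = 3)]
    have key : (3:ℤ) * D = 2^u * (2 * 2^(2*(u+1)-1) - 1) := by
      have : (2:ℤ) * (3 * D) = 2 * (2^u * (2 * 2^(2*(u+1)-1) - 1)) := by
        push_cast at h6
        linear_combination h6
      exact mul_left_cancel₀ (by norm_num) this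
    have : ((2:ℤ)^(u+1-1)) ∣ 3 * D := by
      rw [show u+1-1 = u from rfl, key]
      exact Dvd.intro _ rfl
    have hcop : IsCoprime ((2:ℤ)^(u+1-1)) 3 := by
      apply IsCoprime.pow_left
      rw [Int.isCoprime_iff_gcd_eq_one]; norm_num
    exact hcop.dvd_of_dvd_mul_left this
  · by_cases h3 : p = 3
    · subst h3
      have he : (if (3:ℕ) = 2 ∨ (3:ℕ) = 3 then 1 else 0) = 1 := by norm_num
      rw [he]
      have key : D = 3^u * (2 * 3^(2*(u+1)-1) - 1) := by
        have : (6:ℤ) * D = 6 * (3^u * (2 * 3^(2*(u+1)-1) - 1)) := by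
          push_cast at h6
          linear_combination h6
        exact mul_left_cancel₀ (by norm_num) this
      rw [show u+1-1 = u from rfl, key]
      exact Dvd.intro _ rfl
    · simp only [if_neg (by tauto : ¬(p = 2 ∨ p = 3))]
      have hdvd : ((p:ℤ))^(u+1) ∣ 6 * D := by
        rw [h6]; exact (dvd_mul_right _ _).mul_right _
      have hcop : IsCoprime ((p:ℤ)^(u+1)) 6 := by
        apply IsCoprime.pow_left
        rw [Int.isCoprime_iff_gcd_eq_one]
        have : Nat.Coprime p 6 := by
          have n2 : ¬ p ∣ 2 := fun h => h2 (((Nat.prime_dvd_prime_iff_eq hp.out (by norm_num)).1 h))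
          have n3 : ¬ p ∣ 3 := fun h => h3 (((Nat.prime_dvd_prime_iff_eq hp.out (by norm_num)).1 h))
          have c2 : Nat.Coprime p 2 := (Nat.Prime.coprime_iff_not_dvd hp.out).2 n2
          have c3 : Nat.Coprime p 3 := (Nat.Prime.coprime_iff_not_dvd hp.out).2 n3
          simpa using Nat.Coprime.mul_right c2 c3
        simpa [Int.gcd] using this
      have : ((p:ℤ))^(u+1) ∣ D * 6 := by rwa [mul_comm] at hdvd
      simpa using hcop.dvd_of_dvd_mul_right this

section
variable (p : ℕ) [hp : Fact p.Prime] (v : ℕ)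

private lemma unit_of_not_dvd (hv : 1 ≤ v) (r : ℕ) (hr : ¬ p ∣ r) :
    IsUnit ((r : ZMod (p^v))) := by
  rw [ZMod.isUnit_iff_coprime]
  exact Nat.Coprime.pow_right _ (((Nat.Prime.coprime_iff_not_dvd hp.out).2 hr).symm)

private lemma W_facts (hv : 1 ≤ v) (r : ℕ) (h1 : 1 ≤ r) (h2 : r ≤ p^v) (h3 : ¬ p ∣ r) :
    (1 ≤ ((r : ZMod (p^v))⁻¹).val ∧ ((r : ZMod (p^v))⁻¹).val ≤ p^v ∧
      ¬ p ∣ ((r : ZMod (p^v))⁻¹).val) ∧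
      ((((((r : ZMod (p^v))⁻¹).val : ℕ) : ZMod (p^v))⁻¹).val = r) := by
  have hq1 : 1 < p ^ v := Nat.one_lt_pow (by omega) hp.out.one_lt
  haveI : NeZero (p^v) := ⟨by omega⟩
  haveI : Fact (1 < p ^ v) := ⟨hq1⟩
  have hunit := unit_of_not_dvd p v hv r h3
  set b : ZMod (p^v) := (r : ZMod (p^v))⁻¹ with hb
  have hmul : (r : ZMod (p^v)) * b = 1 := ZMod.mul_inv_of_unit _ hunit
  have hbunit : IsUnit b := IsUnit.of_mul_eq_one _ (by rw [mul_comm]; exact hmul)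
  have hcast : ((b.val : ℕ) : ZMod (p^v)) = b := by
    rw [ZMod.natCast_val, ZMod.cast_id]
  have hbne : b ≠ 0 := by
    intro h
    rw [h, mul_zero] at hmul
    exact zero_ne_one hmul
  have hval1 : 1 ≤ b.val := by
    rcases Nat.eq_zero_or_pos b.val with h | h
    · exfalso; apply hbne; rw [← hcast, h]; simp
    · exact h
  have hvalle : b.val ≤ p^v := le_of_lt (ZMod.val_lt b)
  have hnd : ¬ p ∣ b.val := by
    intro hdvd
    have : IsUnit ((b.val : ℕ) : ZMod (p^v)) := by rw [hcast]; exact hbunit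
    rw [ZMod.isUnit_iff_coprime] at this
    have hpg : p ∣ Nat.gcd b.val (p^v) := Nat.dvd_gcd hdvd (dvd_pow_self p (by omega))
    rw [this] at hpg
    exact Nat.Prime.one_lt hp.out |>.ne' (Nat.eq_one_of_dvd_one hpg)
  have hrlt : r < p^v := lt_of_le_of_ne h2 (fun h => h3 (h ▸ dvd_pow_self p (by omega)))
  have hinv : b⁻¹ = (r : ZMod (p^v)) := by
    have hmul2 : b * b⁻¹ = 1 := ZMod.mul_inv_of_unit b hbunit
    calc b⁻¹ = 1 * b⁻¹ := (one_mul _).symm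
      _ = ((r:ZMod (p^v)) * b) * b⁻¹ := by rw [hmul]
      _ = (r:ZMod (p^v)) * (b * b⁻¹) := mul_assoc _ _ _
      _ = (r:ZMod (p^v)) := by rw [hmul2, mul_one]
  refine ⟨⟨hval1, hvalle, hnd⟩, ?_⟩
  rw [hcast, hinv, ZMod.val_natCast, Nat.mod_eq_of_lt hrlt]

private lemma sum_inv_sq (hv : 1 ≤ v) :
    ∑ r ∈ (Finset.Icc 1 (p^v)).filter (fun r => ¬ p ∣ r),
        ((((r : ZMod (p^v))⁻¹).val : ℚ_[p]))^2
      = ∑ r ∈ (Finset.Icc 1 (p^v)).filter (fun r => ¬ p ∣ r), (r : ℚ_[p])^2 := by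
  refine Finset.sum_nbij' (fun r => ((r : ZMod (p^v))⁻¹).val)
    (fun r => ((r : ZMod (p^v))⁻¹).val) ?_ ?_ ?_ ?_ ?_
  · intro a ha
    simp only [Finset.mem_filter, Finset.mem_Icc] at ha ⊢
    obtain ⟨⟨h1, h2⟩, h3⟩ := ha
    obtain ⟨⟨g1, g2, g3⟩, _⟩ := W_facts p v hv a h1 h2 h3
    exact ⟨⟨g1, g2⟩, g3⟩
  · intro a ha
    simp only [Finset.mem_filter, Finset.mem_Icc] at ha ⊢
    obtain ⟨⟨h1, h2⟩, h3⟩ := ha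
    obtain ⟨⟨g1, g2, g3⟩, _⟩ := W_facts p v hv a h1 h2 h3
    exact ⟨⟨g1, g2⟩, g3⟩
  · intro a ha
    simp only [Finset.mem_filter, Finset.mem_Icc] at ha
    exact (W_facts p v hv a ha.1.1 ha.1.2 ha.2).2
  · intro a ha
    simp only [Finset.mem_filter, Finset.mem_Icc] at ha
    exact (W_facts p v hv a ha.1.1 ha.1.2 ha.2).2
  · intro a _
    rfl

private lemma norm_nat_eq_one (k : ℕ) (hk : ¬ p ∣ k) : ‖(k : ℚ_[p])‖ = 1 := by
  have h1 : ‖((k : ℤ) : ℚ_[p])‖ ≤ 1 := Padic.norm_int_le_one _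
  have h2 : ¬ ‖((k : ℤ) : ℚ_[p])‖ < 1 := by
    rw [Padic.norm_intCast_lt_one_iff]
    exact_mod_cast hk
  push_cast at h1 h2
  linarith [lt_or_eq_of_le h1]

private lemma key_bound (hv : 1 ≤ v) (k : ℕ) (hk : ¬ p ∣ k) :
    ‖(1:ℚ_[p])/(k:ℚ_[p])^2 - ((((k : ZMod (p^v))⁻¹).val : ℚ_[p]))^2‖ ≤ (p:ℝ)^(-(v:ℤ)) := by
  have hq1 : 1 < p ^ v := Nat.one_lt_pow (by omega) hp.out.one_lt
  haveI : NeZero (p^v) := ⟨by omega⟩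
  have hunit := unit_of_not_dvd p v hv k hk
  set w : ℕ := ((k : ZMod (p^v))⁻¹).val with hwdef
  have hcast : ((w : ℕ) : ZMod (p^v)) = (k : ZMod (p^v))⁻¹ := by
    rw [hwdef, ZMod.natCast_val, ZMod.cast_id]
  have hkw : ((k * w : ℕ) : ZMod (p^v)) = 1 := by
    push_cast
    rw [hcast]
    exact ZMod.mul_inv_of_unit _ hunit
  have hdvd : ((p:ℤ))^v ∣ ((k * w : ℕ) : ℤ) - 1 := by
    have : ((((k * w : ℕ) : ℤ) - 1 : ℤ) : ZMod (p^v)) = 0 := by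
      push_cast
      push_cast at hkw
      rw [hkw]; ring
    have h := (ZMod.intCast_zmod_eq_zero_iff_dvd _ (p^v)).mp this
    exact_mod_cast h
  have hknorm : ‖(k : ℚ_[p])‖ = 1 := norm_nat_eq_one p k hk
  have hkne : (k : ℚ_[p]) ≠ 0 := by
    intro h; rw [h, norm_zero] at hknorm; norm_num at hknorm
  set N : ℤ := (((k * w : ℕ) : ℤ) - 1) * (-(((k * w : ℕ) : ℤ) + 1)) with hN
  have hNdvd : ((p:ℤ))^v ∣ N := hdvd.mul_right _
  have hid : (1:ℚ_[p])/(k:ℚ_[p])^2 - ((w : ℕ) : ℚ_[p])^2 = (N : ℚ_[p]) / (k:ℚ_[p])^2 := by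
    rw [hN]
    push_cast
    field_simp
    ring
  rw [hid, norm_div, norm_pow, hknorm]
  simp only [one_pow, div_one]
  have := (Padic.norm_int_le_pow_iff_dvd (p := p) N v).mpr (by exact_mod_cast hNdvd)
  exact this
end

private lemma sum_range_mul {M : Type*} [AddCommMonoid M] (g : ℕ → M) (q m : ℕ) :
    ∑ i ∈ Finset.range (q * m), g i
      = ∑ t ∈ Finset.range m, ∑ j ∈ Finset.range q, g (q * t + j) := by
  induction m with
  | zero => simp
  | succ m ih =>
    rw [Nat.mul_succ, Finset.sum_range_add, ih, Finset.sum_range_succ]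

private lemma icc_filter_to_range {M : Type*} [AddCommMonoid M] (p n : ℕ) (f : ℕ → M) :
    ∑ k ∈ (Finset.Icc 1 n).filter (fun k => ¬ p ∣ k), f k
      = ∑ i ∈ Finset.range n, (if p ∣ (1 + i) then 0 else f (1 + i)) := by
  rw [Finset.sum_filter]
  rw [← Finset.Ico_add_one_right_eq_Icc, Finset.sum_Ico_eq_sum_range]
  apply Finset.sum_congr (by norm_num)
  intro i _
  by_cases h : p ∣ (1 + i) <;> simp [h]

theorem stmt_3 (p : ℕ) [Fact p.Prime] (n : ℕ) (hn : 0 < n) :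
    ‖((∑ k ∈ (Finset.Icc 1 n).filter (fun k => ¬ p ∣ k), (1 : ℚ) / (k ^ 2) : ℚ) : ℚ_[p])‖
      ≤ (p : ℝ) ^ (-(max 0 ((padicValNat p n : ℤ) -
          (if p = 2 then 2 else if p = 3 then 1 else 0) + (if p = 2 then 1 else 0)))) := by
  have hp : p.Prime := Fact.out
  set v := padicValNat p n with hvdef
  have hexp : ((v:ℤ) - (if p = 2 then 2 else if p = 3 then 1 else 0) + (if p = 2 then 1 else 0))
      = (v:ℤ) - ((if p = 2 ∨ p = 3 then 1 else 0 : ℕ) : ℤ) := by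
    by_cases h2 : p = 2
    · simp [h2]; ring
    · by_cases h3 : p = 3 <;> simp [h2, h3]
  rw [hexp]
  -- cast the sum into ℚ_[p] termwise
  have hcast : ((∑ k ∈ (Finset.Icc 1 n).filter (fun k => ¬ p ∣ k), (1 : ℚ) / (k ^ 2) : ℚ) : ℚ_[p])
      = ∑ k ∈ (Finset.Icc 1 n).filter (fun k => ¬ p ∣ k), (1 : ℚ_[p]) / ((k:ℚ_[p]) ^ 2) := by
    push_cast
    rfl
  rw [hcast]
  by_cases hcase : (v:ℤ) - ((if p = 2 ∨ p = 3 then 1 else 0 : ℕ) : ℤ) ≤ 0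
  · -- trivial case
    rw [max_eq_left hcase, neg_zero, zpow_zero]
    apply IsUltrametricDist.norm_sum_le_of_forall_le_of_nonneg zero_le_one
    intro k hk
    simp only [Finset.mem_filter, Finset.mem_Icc] at hk
    have h1 : ‖(k:ℚ_[p])‖ = 1 := norm_nat_eq_one p k hk.2
    rw [norm_div, norm_one, norm_pow, h1]
    norm_num
  · -- main case
    set ε : ℕ := (if p = 2 ∨ p = 3 then 1 else 0) with hεdef
    have hεle : ε ≤ 1 := by rw [hεdef]; split <;> omega
    have hv1 : 1 ≤ v := by omega
    have hve : ε ≤ v := by omega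
    set e : ℕ := v - ε with hedef
    have hmax : max 0 ((v:ℤ) - (ε:ℤ)) = (e:ℤ) := by
      rw [max_eq_right (by omega)]
      omega
    rw [hmax]
    have hq1 : 1 < p ^ v := Nat.one_lt_pow (by omega) hp.one_lt
    have hqd : p ^ v ∣ n := pow_padicValNat_dvd
    obtain ⟨m, hm⟩ : ∃ m, n = p ^ v * m := hqd
    -- the two functions
    set F : ℕ → ℚ_[p] := fun i => if p ∣ (1 + i) then 0 else (1 : ℚ_[p]) / (((1+i : ℕ):ℚ_[p]) ^ 2)
      with hFdef
    set G : ℕ → ℚ_[p] := fun i =>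
      if p ∣ (1 + i) then 0 else ((((((1+i : ℕ) : ZMod (p^v))⁻¹).val : ℕ)):ℚ_[p]) ^ 2 with hGdef
    have hXF : ∑ k ∈ (Finset.Icc 1 n).filter (fun k => ¬ p ∣ k), (1 : ℚ_[p]) / ((k:ℚ_[p]) ^ 2)
        = ∑ i ∈ Finset.range n, F i := icc_filter_to_range p n _
    rw [hXF]
    -- G is periodic with period p^v
    have hGper : ∀ t j, G (p ^ v * t + j) = G j := by
      intro t j
      have hz : ((p^v*t : ℕ) : ZMod (p^v)) = 0 := by
        rw [Nat.cast_mul, ZMod.natCast_self, zero_mul]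
      have hc : ((1 + (p^v*t + j) : ℕ) : ZMod (p^v)) = ((1 + j : ℕ) : ZMod (p^v)) := by
        push_cast
        push_cast at hz
        rw [← add_assoc, add_comm (1:ZMod (p^v)), add_assoc, add_comm ((p:ZMod (p^v))^v * t)]
        rw [hz, add_zero]
      have hdd : p ∣ (1 + (p^v*t + j)) ↔ p ∣ (1 + j) := by
        have hpq : p ∣ p^v*t := Dvd.dvd.mul_right (dvd_pow_self p (by omega)) t
        have hre : 1 + (p^v*t + j) = p^v*t + (1 + j) := by omega
        rw [hre]
        exact Nat.dvd_add_right hpq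
      simp only [hGdef]
      rw [hc]
      by_cases h : p ∣ (1 + j)
      · rw [if_pos (hdd.mpr h), if_pos h]
      · rw [if_neg (fun hh => h (hdd.mp hh)), if_neg h]
    -- the value of the G-sum
    set Z : ℚ_[p] := ∑ j ∈ Finset.range (p^v), G j with hZdef
    have hGsum : ∑ i ∈ Finset.range n, G i = m • Z := by
      rw [hm, sum_range_mul]
      rw [Finset.sum_congr rfl (fun t _ => Finset.sum_congr rfl (fun j _ => hGper t j))]
      rw [Finset.sum_const, Finset.card_range]
    have hZD : Z = ((∑ r ∈ (Finset.Icc 1 (p^v)).filter (fun r => ¬ p ∣ r), (r:ℤ)^2 : ℤ) : ℚ_[p]) := by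
      rw [hZdef, ← icc_filter_to_range p (p^v)
        (fun r => ((((r : ZMod (p^v))⁻¹).val : ℚ_[p]))^2)]
      rw [sum_inv_sq p v hv1]
      push_cast
      rfl
    have hZnorm : ‖Z‖ ≤ (p:ℝ) ^ (-(e:ℤ)) := by
      rw [hZD]
      exact (Padic.norm_int_le_pow_iff_dvd _ e).mpr (dvd_D p v hv1)
    -- final estimate
    have hdiff : ‖∑ i ∈ Finset.range n, F i - ∑ i ∈ Finset.range n, G i‖ ≤ (p:ℝ) ^ (-(v:ℤ)) := by
      rw [← Finset.sum_sub_distrib]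
      apply IsUltrametricDist.norm_sum_le_of_forall_le_of_nonneg (by positivity)
      intro i _
      by_cases h : p ∣ (1 + i)
      · simp only [hFdef, hGdef, if_pos h, sub_zero, norm_zero]
        positivity
      · have hb := key_bound p v hv1 (1+i) h
        simp only [hFdef, hGdef, if_neg h]
        exact hb
    have hY : ‖∑ i ∈ Finset.range n, G i‖ ≤ (p:ℝ) ^ (-(e:ℤ)) := by
      rw [hGsum, nsmul_eq_mul]
      have h1 : ‖((m:ℤ):ℚ_[p])‖ ≤ 1 := Padic.norm_int_le_one _
      push_cast at h1
      calc ‖(m:ℚ_[p]) * Z‖ = ‖(m:ℚ_[p])‖ * ‖Z‖ := norm_mul _ _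
        _ ≤ 1 * ((p:ℝ) ^ (-(e:ℤ))) := by
            apply mul_le_mul h1 hZnorm (norm_nonneg _) zero_le_one
        _ = (p:ℝ) ^ (-(e:ℤ)) := one_mul _
    have hvz : (p:ℝ) ^ (-(v:ℤ)) ≤ (p:ℝ) ^ (-(e:ℤ)) := by
      apply zpow_le_zpow_right₀ (by exact_mod_cast hp.one_lt.le) (by omega)
    calc ‖∑ i ∈ Finset.range n, F i‖
        = ‖(∑ i ∈ Finset.range n, F i - ∑ i ∈ Finset.range n, G i)
            + ∑ i ∈ Finset.range n, G i‖ := by ring_nf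
      _ ≤ max ‖∑ i ∈ Finset.range n, F i - ∑ i ∈ Finset.range n, G i‖
            ‖∑ i ∈ Finset.range n, G i‖ := Padic.nonarchimedean _ _
      _ ≤ (p:ℝ) ^ (-(e:ℤ)) := max_le (le_trans hdiff hvz) hY
end

section
/- For n = 2^r with r ≥ 3, the sum ∑_{1 ≤ k ≤ 2^r, k odd} 1/k² is divisible by 2^{r−1} in ℤ_2. -/
open IsUltrametricDist

private lemma odd_unit_norm (k : ℕ) (hk : Odd k) : ‖(k : ℚ_[2])‖ = 1 := by
  have h2 : ¬ ((2:ℤ) ∣ (k:ℤ)) := by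
    obtain ⟨m, rfl⟩ := hk; push_cast; omega
  have h1 : ‖((k:ℤ) : ℚ_[2])‖ ≤ 1 := Padic.norm_int_le_one _
  have h3 : ¬ (‖((k:ℤ) : ℚ_[2])‖ < 1) := by
    rw [Padic.norm_intCast_lt_one_iff]; exact_mod_cast h2
  push_cast at h1 h3
  linarith [lt_or_eq_of_le h1, not_lt.mp h3]

private lemma norm_two_pow (n : ℕ) : ‖((2:ℚ_[2]))^n‖ = (2:ℝ)^(-(n:ℤ)) := by
  rw [norm_pow]
  have : ‖(2:ℚ_[2])‖ = 2⁻¹ := by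
    have := @Padic.norm_p 2 ⟨Nat.prime_two⟩
    simpa using this
  rw [this, zpow_neg, zpow_natCast, inv_pow]

private lemma key (r : ℕ) (hr : 3 ≤ r) :
    ‖∑ k ∈ ((Finset.Icc 1 (2 ^ r) : Finset ℕ)).filter (fun k => Odd k),
        (1 : ℚ_[2]) / ((k : ℚ_[2]) ^ 2)‖ ≤ (2 : ℝ) ^ (-((r : ℤ) - 1)) := by
  induction r, hr using Nat.le_induction with
  | base =>
    have hset : ((Finset.Icc 1 (2^3) : Finset ℕ)).filter (fun k => Odd k) = {1,3,5,7} := by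
      decide
    rw [hset]
    have hsum : ∑ k ∈ ({1,3,5,7} : Finset ℕ), (1 : ℚ_[2]) / ((k : ℚ_[2]) ^ 2)
        = (2:ℚ_[2])^2 * (3229/11025) := by
      norm_num [Finset.sum_insert, Finset.mem_insert]
    rw [hsum, norm_mul, norm_two_pow]
    have h1 : ‖((3229:ℤ) : ℚ_[2])‖ = 1 := by
      have := odd_unit_norm 3229 (by decide)
      push_cast at this ⊢; exact this
    have h2 : ‖((11025:ℤ) : ℚ_[2])‖ = 1 := by
      have := odd_unit_norm 11025 (by decide)
      push_cast at this ⊢; exact this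
    have : ‖(3229/11025 : ℚ_[2])‖ = 1 := by
      rw [norm_div]
      push_cast at h1 h2
      rw [h1, h2]; norm_num
    rw [this, mul_one]
    norm_num
  | succ r hr ih =>
    set N := 2^r with hN
    have hN8 : 8 ≤ N := by
      calc (8:ℕ) = 2^3 := by norm_num
      _ ≤ 2^r := Nat.pow_le_pow_right (by norm_num) hr
    have hNe : N % 2 = 0 := by
      have : N = 2 * 2^(r-1) := by rw [hN, ← pow_succ']; congr 1; omega
      omega
    have h2N : 2^(r+1) = 2*N := by rw [hN, pow_succ]; ring
    set A := ((Finset.Icc 1 N : Finset ℕ)).filter (fun k => Odd k) with hA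
    have hmemA : ∀ k ∈ A, 1 ≤ k ∧ k ≤ N ∧ k % 2 = 1 := by
      intro k hk
      simp only [hA, Finset.mem_filter, Finset.mem_Icc, Nat.odd_iff] at hk
      exact ⟨hk.1.1, hk.1.2, hk.2⟩
    have hsplit : ((Finset.Icc 1 (2^(r+1)) : Finset ℕ)).filter (fun k => Odd k)
        = A ∪ A.image (fun k => 2*N - k) := by
      rw [h2N]
      ext m
      simp only [hA, Finset.mem_filter, Finset.mem_Icc, Finset.mem_union, Finset.mem_image,
        Nat.odd_iff]
      constructor
      · rintro ⟨⟨h1, h2⟩, h3⟩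
        by_cases h : m ≤ N
        · exact Or.inl ⟨⟨h1, h⟩, h3⟩
        · exact Or.inr ⟨2*N - m, ⟨⟨by omega, by omega⟩, by omega⟩, by omega⟩
      · rintro (⟨⟨h1, h2⟩, h3⟩ | ⟨k, ⟨⟨h1, h2⟩, h3⟩, rfl⟩) <;> omega
    have hdisj : Disjoint A (A.image (fun k => 2*N - k)) := by
      rw [Finset.disjoint_left]
      intro a ha hb
      obtain ⟨ha1, ha2, ha3⟩ := hmemA a ha
      obtain ⟨b, hb, hab⟩ := Finset.mem_image.mp hb
      obtain ⟨hb1, hb2, hb3⟩ := hmemA b hb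
      omega
    have hinj : ∀ x ∈ A, ∀ y ∈ A, 2*N - x = 2*N - y → x = y := by
      intro x hx y hy h
      obtain ⟨hx1, hx2, _⟩ := hmemA x hx
      obtain ⟨hy1, hy2, _⟩ := hmemA y hy
      omega
    have hpair : ∀ k ∈ A,
        ‖(1:ℚ_[2])/(((2*N - k : ℕ)):ℚ_[2])^2 - 1/((k:ℚ_[2]))^2‖ ≤ (2:ℝ)^(-((r:ℤ)+2)) := by
      intro k hk
      obtain ⟨hk1, hk2, hko⟩ := hmemA k hk
      have hKn : ‖(k:ℚ_[2])‖ = 1 := odd_unit_norm k (Nat.odd_iff.mpr hko)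
      have hMn : ‖((2*N - k : ℕ):ℚ_[2])‖ = 1 :=
        odd_unit_norm _ (Nat.odd_iff.mpr (by omega))
      have hK0 : (k:ℚ_[2]) ≠ 0 := by intro h; rw [h] at hKn; simp at hKn
      have hM0 : ((2*N - k : ℕ):ℚ_[2]) ≠ 0 := by intro h; rw [h] at hMn; simp at hMn
      have hMc : ((2*N - k : ℕ):ℚ_[2]) = 2*(2:ℚ_[2])^r - (k:ℚ_[2]) := by
        have hle : k ≤ 2*N := by omega
        rw [Nat.cast_sub hle]; push_cast [hN]
        ring
      have hdiff : ((k:ℚ_[2]))^2 - (((2*N - k : ℕ)):ℚ_[2])^2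
          = (2:ℚ_[2])^(r+2) * ((k:ℚ_[2]) - 2^r) := by
        rw [hMc]; ring
      have hid : (1:ℚ_[2])/(((2*N - k : ℕ)):ℚ_[2])^2 - 1/((k:ℚ_[2]))^2
          = (((k:ℚ_[2]))^2 - (((2*N - k : ℕ)):ℚ_[2])^2)
            / ((((2*N - k : ℕ)):ℚ_[2])^2 * ((k:ℚ_[2]))^2) := by
        rw [div_sub_div _ _ (pow_ne_zero 2 hM0) (pow_ne_zero 2 hK0), one_mul, mul_one]
      have hint : ‖(k:ℚ_[2]) - 2^r‖ ≤ 1 := by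
        have hc : ((((k:ℤ) - 2^r) : ℤ) : ℚ_[2]) = (k:ℚ_[2]) - 2^r := by push_cast; ring
        rw [← hc]
        exact Padic.norm_int_le_one _
      have hden : ‖(((2*N - k : ℕ)):ℚ_[2])^2 * ((k:ℚ_[2]))^2‖ = 1 := by
        rw [norm_mul, norm_pow, norm_pow, hKn, hMn]; norm_num
      have hexp : (-((r+2:ℕ):ℤ)) = -((r:ℤ)+2) := by push_cast; ring
      rw [hid, hdiff, norm_div, norm_mul, hden, norm_two_pow, hexp, div_one]
      exact mul_le_of_le_one_right (by positivity) hint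
    rw [hsplit, Finset.sum_union hdisj, Finset.sum_image hinj]
    have hrw : (∑ k ∈ A, (1:ℚ_[2])/((k:ℚ_[2]))^2)
          + ∑ k ∈ A, (1:ℚ_[2])/(((2*N - k : ℕ)):ℚ_[2])^2
        = 2 * (∑ k ∈ A, (1:ℚ_[2])/((k:ℚ_[2]))^2)
          + ∑ k ∈ A, ((1:ℚ_[2])/(((2*N - k : ℕ)):ℚ_[2])^2 - 1/((k:ℚ_[2]))^2) := by
      rw [Finset.sum_sub_distrib]
      ring
    rw [hrw]
    have hE : ‖∑ k ∈ A, ((1:ℚ_[2])/(((2*N - k : ℕ)):ℚ_[2])^2 - 1/((k:ℚ_[2]))^2)‖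
        ≤ (2:ℝ)^(-((r:ℤ)+2)) :=
      norm_sum_le_of_forall_le_of_nonneg (by positivity) hpair
    have hS : ‖2 * (∑ k ∈ A, (1:ℚ_[2])/((k:ℚ_[2]))^2)‖ ≤ (2:ℝ)^(-(r:ℤ)) := by
      rw [norm_mul]
      have h2 : ‖(2:ℚ_[2])‖ = (2:ℝ)⁻¹ := by
        have := norm_two_pow 1; simpa using this
      rw [h2]
      calc (2:ℝ)⁻¹ * ‖∑ k ∈ A, (1:ℚ_[2])/((k:ℚ_[2]))^2‖
          ≤ (2:ℝ)⁻¹ * (2:ℝ)^(-((r:ℤ)-1)) := by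
            exact mul_le_mul_of_nonneg_left ih (by positivity)
        _ = (2:ℝ)^(-(r:ℤ)) := by
            rw [← zpow_neg_one, ← zpow_add₀ (two_ne_zero)]
            ring_nf
    have hgoal : -(((r+1:ℕ):ℤ) - 1) = -(r:ℤ) := by push_cast; ring
    rw [hgoal]
    refine le_trans (norm_add_le_max _ _) (max_le hS (le_trans hE ?_))
    apply zpow_le_zpow_right₀ (by norm_num)
    omega

theorem stmt_4 (r : ℕ) (hr : 3 ≤ r) :
    ‖((∑ k ∈ ((Finset.Icc 1 (2 ^ r) : Finset ℕ)).filter (fun k => Odd k), (1 : ℚ) / ((k : ℚ) ^ 2) : ℚ) : ℚ_[2])‖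
      ≤ (2 : ℝ) ^ (-((r : ℤ) - 1)) := by
  have h := key r hr
  have hc : ((∑ k ∈ ((Finset.Icc 1 (2 ^ r) : Finset ℕ)).filter (fun k => Odd k),
        (1 : ℚ) / ((k : ℚ) ^ 2) : ℚ) : ℚ_[2])
      = ∑ k ∈ ((Finset.Icc 1 (2 ^ r) : Finset ℕ)).filter (fun k => Odd k),
        (1 : ℚ_[2]) / ((k : ℚ_[2]) ^ 2) := by
    push_cast
    rfl
  rw [hc]
  exact h
end

section
/- Let p be a prime, a ≥ b ≥ 0 integers, and r ∈ ℕ. Then the ratio C(a p^r, b p^r) / C(a p^{r−1}, b p^{r−1}) is congruent to 1 + p^r (a−b) F₁ + p^{2r} (a−b)² F₂ modulo p^{3r} in ℤ_p, where F₁ = ∑_{1 ≤ k ≤ b p^r, p ∤ k} 1/k and F₂ = ∑_{1 ≤ i < j ≤ b p^r, p ∤ ij} 1/(ij). -/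
open Finset

private lemma sum_norm_le' {p : ℕ} [Fact p.Prime] {ι : Type*} (s : Finset ι) (f : ι → ℚ_[p]) {ε : ℝ}
    (hε : 0 ≤ ε) : (∀ i ∈ s, ‖f i‖ ≤ ε) → ‖∑ i ∈ s, f i‖ ≤ ε := by
  classical
  induction s using Finset.induction with
  | empty => intro _; simpa using hε
  | @insert a t ha ih =>
    intro h
    rw [Finset.sum_insert ha]
    refine le_trans (Padic.nonarchimedean _ _) (max_le (h a (by simp)) ?_)
    exact ih fun i hi => h i (by simp [hi])

private lemma key_lemma {p : ℕ} [Fact p.Prime] (x : ℕ → ℚ_[p]) {ε : ℝ} (hε0 : 0 ≤ ε) (hε1 : ε ≤ 1)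
    (s : Finset ℕ) (hx : ∀ k ∈ s, ‖x k‖ ≤ ε) :
    ‖∏ k ∈ s, (1 + x k) - (1 + ∑ k ∈ s, x k +
      ∑ j ∈ s, ∑ i ∈ s.filter (· < j), x i * x j)‖ ≤ ε ^ 3 := by
  classical
  revert hx
  induction s using Finset.induction_on_max with
  | empty => intro _; simpa using pow_nonneg hε0 3
  | insert a s hlt ih =>
    intro hx
    have hans : a ∉ s := fun h => lt_irrefl a (hlt a h)
    have hxa : ‖x a‖ ≤ ε := hx a (by simp)
    have hxs : ∀ k ∈ s, ‖x k‖ ≤ ε := fun k hk => hx k (by simp [hk])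
    set P := ∏ k ∈ s, (1 + x k)
    set E1 := ∑ k ∈ s, x k
    set E2 := ∑ j ∈ s, ∑ i ∈ s.filter (· < j), x i * x j
    have hprod : ∏ k ∈ insert a s, (1 + x k) = (1 + x a) * P := Finset.prod_insert hans
    have hsum : ∑ k ∈ insert a s, x k = x a + E1 := Finset.sum_insert hans
    have hE2 : ∑ j ∈ insert a s, ∑ i ∈ (insert a s).filter (· < j), x i * x j
        = E1 * x a + E2 := by
      rw [Finset.sum_insert hans]
      have h1 : (insert a s).filter (· < a) = s := by
        rw [Finset.filter_insert, if_neg (lt_irrefl a), Finset.filter_true_of_mem hlt]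
      have h2 : ∀ j ∈ s, (insert a s).filter (· < j) = s.filter (· < j) := by
        intro j hj
        rw [Finset.filter_insert, if_neg (by exact fun h => absurd (hlt j hj) (not_lt.2 h.le))]
      rw [h1, ← Finset.sum_mul]
      congr 1
      exact Finset.sum_congr rfl fun j hj => by rw [h2 j hj]
    rw [hprod, hsum, hE2]
    have heq : (1 + x a) * P - (1 + (x a + E1) + (E1 * x a + E2))
        = (1 + x a) * (P - (1 + E1 + E2)) + x a * E2 := by ring
    rw [heq]
    have hE2norm : ‖E2‖ ≤ ε ^ 2 := by
      refine sum_norm_le' _ _ (by positivity) fun j hj => ?_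
      refine sum_norm_le' _ _ (by positivity) fun i hi => ?_
      rw [norm_mul, sq]
      exact mul_le_mul (hxs i (Finset.mem_filter.1 hi).1) (hxs j hj) (norm_nonneg _) hε0
    have h1a : ‖1 + x a‖ ≤ 1 := le_trans (Padic.nonarchimedean _ _)
      (max_le (by simp) (le_trans hxa hε1))
    refine le_trans (Padic.nonarchimedean _ _) (max_le ?_ ?_)
    · calc ‖(1 + x a) * (P - (1 + E1 + E2))‖ = ‖1 + x a‖ * ‖P - (1 + E1 + E2)‖ := norm_mul _ _
        _ ≤ 1 * (ε ^ 3) := mul_le_mul h1a (ih hxs) (norm_nonneg _) zero_le_one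
        _ = ε ^ 3 := one_mul _
    · calc ‖x a * E2‖ = ‖x a‖ * ‖E2‖ := norm_mul _ _
        _ ≤ ε * ε ^ 2 := mul_le_mul hxa hE2norm (norm_nonneg _) hε0
        _ = ε ^ 3 := by ring

private lemma choose_prod (c N : ℕ) :
    ((c + N).choose N : ℚ) = ∏ k ∈ Finset.Icc 1 N, (((c : ℚ) + k) / k) := by
  induction N with
  | zero => simp
  | succ n ih =>
    rw [Finset.prod_Icc_succ_top (Nat.le_add_left 1 n), ← ih]
    have h := Nat.add_one_mul_choose_eq (c + n) n
    have h' : ((c + n + 1 : ℕ) : ℚ) * ((c + n).choose n : ℚ)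
        = ((c + n + 1).choose (n + 1) : ℚ) * ((n + 1 : ℕ) : ℚ) := by exact_mod_cast h
    have hn : ((n : ℚ) + 1) ≠ 0 := by positivity
    push_cast at h' ⊢
    rw [show c + (n + 1) = c + n + 1 from rfl]
    field_simp
    linarith [h']

private lemma ratio_prod (p : ℕ) (hp : 0 < p) (a b r : ℕ) (hba : b ≤ a) (hr : 0 < r) :
    ((a * p ^ r).choose (b * p ^ r) : ℚ) =
      ((a * p ^ (r - 1)).choose (b * p ^ (r - 1)) : ℚ) *
        ∏ k ∈ (Finset.Icc 1 (b * p ^ r)).filter (fun k => ¬ p ∣ k),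
          (1 + (p : ℚ) ^ r * ((a : ℚ) - (b : ℚ)) / k) := by
  classical
  set c := (a - b) * p ^ r with hc
  set N := b * p ^ r with hN
  set d := (a - b) * p ^ (r - 1) with hd
  set M := b * p ^ (r - 1) with hM
  have hpr : p ^ r = p ^ (r - 1) * p := by
    conv_lhs => rw [show r = (r - 1) + 1 by omega]
    rw [pow_succ]
  have hcd : c = p * d := by rw [hc, hd, hpr]; ring
  have hNM : N = M * p := by rw [hN, hM, hpr]; ring
  have haN : a * p ^ r = c + N := by rw [hc, hN, ← add_mul, Nat.sub_add_cancel hba]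
  have haM : a * p ^ (r - 1) = d + M := by rw [hd, hM, ← add_mul, Nat.sub_add_cancel hba]
  rw [haN, haM, choose_prod, choose_prod]
  rw [← Finset.prod_filter_mul_prod_filter_not (Finset.Icc 1 N) (fun k => p ∣ k)]
  congr 1
  · -- divisible part
    have himg : (Finset.Icc 1 N).filter (fun k => p ∣ k) = (Finset.Icc 1 M).image (fun m => p * m) := by
      ext k
      simp only [Finset.mem_filter, Finset.mem_Icc, Finset.mem_image]
      constructor
      · rintro ⟨⟨h1, h2⟩, m, rfl⟩
        exact ⟨m, ⟨by nlinarith, by rw [hNM] at h2; nlinarith⟩, rfl⟩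
      · rintro ⟨m, ⟨h1, h2⟩, rfl⟩
        exact ⟨⟨by nlinarith, by rw [hNM]; nlinarith⟩, m, rfl⟩
    rw [himg, Finset.prod_image (fun x _ y _ h => by
      exact Nat.eq_of_mul_eq_mul_left hp h)]
    refine Finset.prod_congr rfl fun m hm => ?_
    have hm1 : 1 ≤ m := (Finset.mem_Icc.1 hm).1
    have hpq : (p : ℚ) ≠ 0 := by positivity
    rw [hcd]
    push_cast
    rw [← mul_add, mul_div_mul_left _ _ hpq]
  · refine Finset.prod_congr rfl fun k hk => ?_
    have hk1 : 1 ≤ k := (Finset.mem_Icc.1 (Finset.mem_filter.1 hk).1).1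
    have hkq : (k : ℚ) ≠ 0 := by positivity
    have hcq : ((c : ℕ) : ℚ) = (p : ℚ) ^ r * ((a : ℚ) - (b : ℚ)) := by
      rw [hc]; push_cast [Nat.cast_sub hba]; ring
    rw [hcq, add_div, div_self hkq, add_comm]

theorem stmt_8 (p : ℕ) [Fact p.Prime] (a b : ℕ) (hba : b ≤ a) (r : ℕ) (hr : 0 < r) :
    ‖((((Nat.choose (a * p ^ r) (b * p ^ r) : ℚ) /
          (Nat.choose (a * p ^ (r - 1)) (b * p ^ (r - 1)) : ℚ))
        - (1 + (p : ℚ) ^ r * ((a : ℚ) - (b : ℚ)) *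
            (∑ k ∈ (Finset.Icc 1 (b * p ^ r)).filter (fun k => ¬ p ∣ k), (1 : ℚ) / k)
          + (p : ℚ) ^ (2 * r) * ((a : ℚ) - (b : ℚ)) ^ 2 *
            (∑ j ∈ (Finset.Icc 1 (b * p ^ r)).filter (fun j => ¬ p ∣ j),
              ∑ i ∈ (Finset.Icc 1 (j - 1)).filter (fun i => ¬ p ∣ i),
                (1 : ℚ) / ((i : ℚ) * (j : ℚ)))) : ℚ) : ℚ_[p])‖
      ≤ (p : ℝ) ^ (-(3 * r : ℤ)) := by
  classical
  have hp : p.Prime := Fact.out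
  set S : Finset ℕ := (Finset.Icc 1 (b * p ^ r)).filter (fun k => ¬ p ∣ k) with hS
  have hC : ((a * p ^ (r - 1)).choose (b * p ^ (r - 1)) : ℚ) ≠ 0 := by
    exact_mod_cast (Nat.choose_pos (Nat.mul_le_mul_right _ hba)).ne'
  have hratio : (((a * p ^ r).choose (b * p ^ r) : ℚ) /
      ((a * p ^ (r - 1)).choose (b * p ^ (r - 1)) : ℚ))
      = ∏ k ∈ S, (1 + (p : ℚ) ^ r * ((a : ℚ) - (b : ℚ)) / k) := by
    rw [ratio_prod p hp.pos a b r hba hr, hS, mul_div_cancel_left₀ _ hC]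
  have hset : ∀ j ∈ S, (Finset.Icc 1 (j - 1)).filter (fun i => ¬ p ∣ i)
      = S.filter (· < j) := by
    intro j hj
    have hjm := Finset.mem_filter.1 hj
    have hjN := Finset.mem_Icc.1 hjm.1
    ext i
    simp only [hS, Finset.mem_filter, Finset.mem_Icc]
    constructor
    · rintro ⟨⟨h1, h2⟩, hd⟩
      exact ⟨⟨⟨h1, by omega⟩, hd⟩, by omega⟩
    · rintro ⟨⟨⟨h1, _⟩, hd⟩, hlt⟩
      exact ⟨⟨h1, by omega⟩, hd⟩
  have hA : (p : ℚ_[p]) ^ r * ((a : ℚ_[p]) - (b : ℚ_[p])) * (∑ k ∈ S, (1 : ℚ_[p]) / (k : ℚ_[p]))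
      = ∑ k ∈ S, (p : ℚ_[p]) ^ r * ((a : ℚ_[p]) - (b : ℚ_[p])) / (k : ℚ_[p]) := by
    rw [Finset.mul_sum]
    exact Finset.sum_congr rfl fun k _ => by rw [mul_one_div]
  have hB : (p : ℚ_[p]) ^ (2 * r) * ((a : ℚ_[p]) - (b : ℚ_[p])) ^ 2 *
        (∑ j ∈ S, ∑ i ∈ (Finset.Icc 1 (j - 1)).filter (fun i => ¬ p ∣ i),
          (1 : ℚ_[p]) / ((i : ℚ_[p]) * (j : ℚ_[p])))
      = ∑ j ∈ S, ∑ i ∈ S.filter (· < j),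
          ((p : ℚ_[p]) ^ r * ((a : ℚ_[p]) - (b : ℚ_[p])) / (i : ℚ_[p])) *
          ((p : ℚ_[p]) ^ r * ((a : ℚ_[p]) - (b : ℚ_[p])) / (j : ℚ_[p])) := by
    rw [Finset.mul_sum]
    refine Finset.sum_congr rfl fun j hj => ?_
    rw [Finset.mul_sum, hset j hj]
    refine Finset.sum_congr rfl fun i _ => ?_
    rw [two_mul, pow_add]
    ring
  have hcast : ((((Nat.choose (a * p ^ r) (b * p ^ r) : ℚ) /
          (Nat.choose (a * p ^ (r - 1)) (b * p ^ (r - 1)) : ℚ))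
        - (1 + (p : ℚ) ^ r * ((a : ℚ) - (b : ℚ)) *
            (∑ k ∈ S, (1 : ℚ) / k)
          + (p : ℚ) ^ (2 * r) * ((a : ℚ) - (b : ℚ)) ^ 2 *
            (∑ j ∈ S,
              ∑ i ∈ (Finset.Icc 1 (j - 1)).filter (fun i => ¬ p ∣ i),
                (1 : ℚ) / ((i : ℚ) * (j : ℚ)))) : ℚ) : ℚ_[p])
      = (∏ k ∈ S, (1 + (fun k => (p : ℚ_[p]) ^ r * ((a : ℚ_[p]) - (b : ℚ_[p])) / (k : ℚ_[p])) k))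
        - (1 + (∑ k ∈ S, (fun k => (p : ℚ_[p]) ^ r * ((a : ℚ_[p]) - (b : ℚ_[p])) / (k : ℚ_[p])) k)
          + ∑ j ∈ S, ∑ i ∈ S.filter (· < j),
              (fun k => (p : ℚ_[p]) ^ r * ((a : ℚ_[p]) - (b : ℚ_[p])) / (k : ℚ_[p])) i *
              (fun k => (p : ℚ_[p]) ^ r * ((a : ℚ_[p]) - (b : ℚ_[p])) / (k : ℚ_[p])) j) := by
    rw [hratio]
    push_cast
    rw [hA, hB]
  have hε0 : (0 : ℝ) ≤ (p : ℝ) ^ (-(r : ℤ)) := by positivity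
  have hp1 : (1 : ℝ) ≤ (p : ℝ) := by exact_mod_cast hp.one_lt.le
  have hε1 : (p : ℝ) ^ (-(r : ℤ)) ≤ 1 := by
    rw [zpow_neg, zpow_natCast]
    exact inv_le_one_of_one_le₀ (one_le_pow₀ hp1)
  have hxk : ∀ k ∈ S, ‖(p : ℚ_[p]) ^ r * ((a : ℚ_[p]) - (b : ℚ_[p])) / (k : ℚ_[p])‖
      ≤ (p : ℝ) ^ (-(r : ℤ)) := by
    intro k hk
    obtain ⟨hk1, hkd⟩ := Finset.mem_filter.1 hk
    have hk1' : 1 ≤ k := (Finset.mem_Icc.1 hk1).1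
    have hknorm : ‖((k : ℕ) : ℚ_[p])‖ = 1 := by
      have hle : ‖((k : ℤ) : ℚ_[p])‖ ≤ 1 := Padic.norm_int_le_one _
      have hnlt : ¬ ‖((k : ℤ) : ℚ_[p])‖ < 1 := by
        rw [Padic.norm_intCast_lt_one_iff]
        exact fun h => hkd (Int.natCast_dvd_natCast.1 h)
      have := le_antisymm hle (not_lt.1 hnlt)
      simpa using this
    have hab : ‖(a : ℚ_[p]) - (b : ℚ_[p])‖ ≤ 1 := by
      have h1 : ((a : ℚ_[p]) - (b : ℚ_[p])) = (((a : ℤ) - (b : ℤ) : ℤ) : ℚ_[p]) := by push_cast; ring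
      rw [h1]; exact Padic.norm_int_le_one _
    have hpr : ‖(p : ℚ_[p]) ^ r‖ = (p : ℝ) ^ (-(r : ℤ)) := by
      rw [norm_pow, Padic.norm_p, inv_pow, ← zpow_natCast, ← zpow_neg]
    rw [norm_div, norm_mul, hpr, hknorm, div_one]
    calc (p : ℝ) ^ (-(r : ℤ)) * ‖(a : ℚ_[p]) - (b : ℚ_[p])‖
        ≤ (p : ℝ) ^ (-(r : ℤ)) * 1 := by
          exact mul_le_mul_of_nonneg_left hab hε0
      _ = (p : ℝ) ^ (-(r : ℤ)) := mul_one _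
  have h3 : ((p : ℝ) ^ (-(r : ℤ))) ^ (3 : ℕ) = (p : ℝ) ^ (-(3 * r : ℤ)) := by
    rw [← zpow_natCast ((p : ℝ) ^ (-(r : ℤ))) 3, ← zpow_mul]
    congr 1
    push_cast
    ring
  rw [hcast, ← h3]
  exact key_lemma _ hε0 hε1 S hxk
end

section
/- Let p be a prime, y ∈ ℤ_p^ℕ, and 1 ≤ k ≤ m integers with ord_p(k) > ord_p(m). Then (k!/m!)·B_{m,k}(!y) ≡ 0 mod p^{ord_p(k) − ord_p(m)} in ℤ_p, where B_{m,k} is the partial Bell polynomial and !y = (n!·y_n)_n. -/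
open Finset

lemma padicValNat_le_of_dvd' (p : ℕ) [Fact p.Prime] {a b : ℕ} (h : a ∣ b) (hb : b ≠ 0) :
    padicValNat p a ≤ padicValNat p b := by
  rw [← padicValNat_dvd_iff_le hb]
  exact dvd_trans pow_padicValNat_dvd h

lemma choose_val' (p : ℕ) [Fact p.Prime] {r k : ℕ} (hr : r ≠ 0) (hrk : r ≤ k) :
    padicValNat p k ≤ padicValNat p r + padicValNat p (k.choose r) := by
  have hk : k ≠ 0 := fun h0 => hr (Nat.le_zero.mp (h0 ▸ hrk))
  have hid : k * (k - 1).choose (r - 1) = k.choose r * r := by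
    have := Nat.add_one_mul_choose_eq (k - 1) (r - 1)
    simpa [Nat.succ_eq_add_one, Nat.sub_add_cancel (Nat.one_le_iff_ne_zero.mpr hk),
      Nat.sub_add_cancel (Nat.one_le_iff_ne_zero.mpr hr)] using this
  have hc' : (k - 1).choose (r - 1) ≠ 0 := (Nat.choose_pos (Nat.sub_le_sub_right hrk 1)).ne'
  have hc : k.choose r ≠ 0 := (Nat.choose_pos hrk).ne'
  have := congrArg (padicValNat p) hid
  rw [padicValNat.mul hk hc', padicValNat.mul hc hr] at this
  omega

lemma choose_dvd_multinomial' {n : ℕ} (α : Fin n → ℕ) (j : Fin n) :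
    ((∑ i, α i).choose (α j)) ∣ Nat.multinomial Finset.univ α := by
  have hj : j ∉ Finset.univ.erase j := Finset.notMem_erase j _
  have h := Nat.multinomial_insert (f := α) hj
  rw [Finset.insert_erase (Finset.mem_univ j)] at h
  rw [h, Finset.add_sum_erase _ α (Finset.mem_univ j)]
  exact Dvd.intro _ rfl

lemma mult_val' (p : ℕ) [Fact p.Prime] {m k n : ℕ} (α : Fin n → ℕ) (hm : m ≠ 0)
    (hsum : (∑ i, α i) = k) (hwsum : (∑ i, (i.1 + 1) * α i) = m) :
    padicValNat p k ≤ padicValNat p m + padicValNat p (Nat.multinomial Finset.univ α) := by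
  set v := padicValNat p m with hv
  have hnd : ¬ p ^ (v + 1) ∣ m := pow_succ_padicValNat_not_dvd hm
  have hj : ∃ j : Fin n, ¬ p ^ (v + 1) ∣ (j.1 + 1) * α j := by
    by_contra hcon
    push_neg at hcon
    exact hnd (hwsum ▸ Finset.dvd_sum fun j _ => hcon j)
  obtain ⟨j, hj⟩ := hj
  have hαj : α j ≠ 0 := by
    intro h0; exact hj (by simp [h0])
  have hαjv : padicValNat p (α j) ≤ v := by
    by_contra hcon
    push_neg at hcon
    exact hj (Dvd.dvd.mul_left ((padicValNat_dvd_iff_le hαj).mpr hcon) _)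
  have hαjk : α j ≤ k := hsum ▸ Finset.single_le_sum (fun i _ => Nat.zero_le _) (Finset.mem_univ j)
  have h1 := choose_val' p hαj hαjk
  have h2 : padicValNat p (k.choose (α j)) ≤ padicValNat p (Nat.multinomial Finset.univ α) :=
    padicValNat_le_of_dvd' p (hsum ▸ choose_dvd_multinomial' α j) (Nat.multinomial_pos _ _).ne'
  omega

/-- The index set `π(m,k)` of multi-indices `α ∈ ℕ₀^{m-k+1}` with `∑ α_i = k` and
`∑ i·α_i = m` (indices shifted so that `α i` corresponds to `α_{i+1}`). -/
def bellIndex (m k : ℕ) : Finset (Fin (m - k + 1) → ℕ) :=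
  (Fintype.piFinset fun _ => Finset.range (k + 1)).filter
    fun α => (∑ i, α i) = k ∧ (∑ i, (i.1 + 1) * α i) = m

/-- The `(m,k)`-th partial Bell polynomial evaluated at `x₁, x₂, …`. -/
noncomputable def partialBell {K : Type*} [Field K] (m k : ℕ) (x : ℕ → K) : K :=
  (m.factorial : K) * ∑ α ∈ bellIndex m k,
    ∏ i, (1 / ((α i).factorial : K)) * (x (i.1 + 1) / (((i.1 + 1).factorial : K))) ^ (α i)

theorem stmt_10 (p : ℕ) [Fact p.Prime] (y : ℕ → ℤ_[p]) (k m : ℕ) (h1 : 1 ≤ k) (h2 : k ≤ m)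
    (hval : padicValNat p m < padicValNat p k) :
    ‖((k.factorial : ℚ_[p]) / (m.factorial : ℚ_[p])) *
        partialBell m k (fun n => (n.factorial : ℚ_[p]) * (y n : ℚ_[p]))‖
      ≤ (p : ℝ) ^ (-((padicValNat p k : ℤ) - (padicValNat p m : ℤ))) := by
  have hm0 : m ≠ 0 := by omega
  have hk0 : k ≠ 0 := by omega
  have hmf : ((m.factorial : ℚ_[p])) ≠ 0 := Nat.cast_ne_zero.mpr m.factorial_ne_zero
  -- Step 1: rewrite the expression as a sum of multinomial terms
  have hrw : ((k.factorial : ℚ_[p]) / (m.factorial : ℚ_[p])) *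
        partialBell m k (fun n => (n.factorial : ℚ_[p]) * (y n : ℚ_[p]))
      = ∑ α ∈ bellIndex m k, (Nat.multinomial Finset.univ α : ℚ_[p]) *
          ∏ i, ((y (i.1 + 1) : ℚ_[p])) ^ (α i) := by
    rw [partialBell, ← mul_assoc, div_mul_cancel₀ _ hmf, Finset.mul_sum]
    refine Finset.sum_congr rfl fun α hα => ?_
    obtain ⟨-, hsum, -⟩ := Finset.mem_filter.mp hα
    have h1 : ∀ i : Fin (m - k + 1),
        (fun n => (n.factorial : ℚ_[p]) * (y n : ℚ_[p])) (i.1 + 1) / (((i.1 + 1).factorial : ℚ_[p]))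
          = (y (i.1 + 1) : ℚ_[p]) := fun i =>
      mul_div_cancel_left₀ _ (Nat.cast_ne_zero.mpr (Nat.factorial_ne_zero _))
    simp only [h1, Finset.prod_mul_distrib]
    rw [← mul_assoc]
    congr 1
    have hne : ((∏ i, (α i).factorial : ℕ) : ℚ_[p]) ≠ 0 :=
      Nat.cast_ne_zero.mpr (Finset.prod_ne_zero_iff.mpr fun i _ => Nat.factorial_ne_zero _)
    have hspec : ((∏ i, (α i).factorial : ℕ) : ℚ_[p]) * (Nat.multinomial Finset.univ α : ℚ_[p])
        = (k.factorial : ℚ_[p]) := by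
      rw [← Nat.cast_mul, Nat.multinomial_spec, hsum]
    rw [← hspec]
    push_cast
    have hone : (∏ i, ((α i).factorial : ℚ_[p])) * ∏ i, (1 / ((α i).factorial : ℚ_[p])) = 1 := by
      rw [← Finset.prod_mul_distrib]
      exact Finset.prod_eq_one fun i _ =>
        mul_one_div_cancel (Nat.cast_ne_zero.mpr (Nat.factorial_ne_zero _))
    rw [mul_right_comm, hone, one_mul]
  rw [hrw]
  -- Step 2: the exponent
  have hd : padicValNat p m ≤ padicValNat p k := hval.le
  have he : -((padicValNat p k : ℤ) - (padicValNat p m : ℤ))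
      = -((padicValNat p k - padicValNat p m : ℕ) : ℤ) := by
    rw [Nat.cast_sub hd]
  rw [he]
  set d := padicValNat p k - padicValNat p m with hdd
  -- Step 3: ultrametric bound
  have hppos : (0:ℝ) < p := by exact_mod_cast (Fact.out : p.Prime).pos
  apply IsUltrametricDist.norm_sum_le_of_forall_le_of_nonneg (by positivity)
  intro α hα
  obtain ⟨-, hsum, hwsum⟩ := Finset.mem_filter.mp hα
  rw [norm_mul]
  have hprodle : ‖∏ i, ((y (i.1 + 1) : ℚ_[p])) ^ (α i)‖ ≤ 1 := by
    rw [norm_prod]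
    apply Finset.prod_le_one (fun i _ => norm_nonneg _)
    intro i _
    rw [norm_pow]
    exact pow_le_one₀ (norm_nonneg _)
      (by rw [PadicInt.padic_norm_e_of_padicInt]; exact PadicInt.norm_le_one _)
  have hmultle : ‖(Nat.multinomial Finset.univ α : ℚ_[p])‖ ≤ (p:ℝ) ^ (-(d:ℤ)) := by
    have hv := mult_val' p α hm0 hsum hwsum
    have hdvd : p ^ d ∣ Nat.multinomial Finset.univ α :=
      (padicValNat_dvd_iff_le (Nat.multinomial_pos _ _).ne').mpr (by omega)
    obtain ⟨c, hc⟩ := hdvd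
    rw [hc]
    push_cast
    rw [norm_mul, norm_pow, Padic.norm_p]
    have hcle : ‖((c:ℤ) : ℚ_[p])‖ ≤ 1 := Padic.norm_int_le_one _
    rw [Int.cast_natCast] at hcle
    calc ((p:ℝ)⁻¹) ^ d * ‖((c:ℕ) : ℚ_[p])‖ ≤ ((p:ℝ)⁻¹) ^ d * 1 := by
          apply mul_le_mul_of_nonneg_left hcle (by positivity)
      _ = (p:ℝ) ^ (-(d:ℤ)) := by rw [mul_one, zpow_neg, zpow_natCast, inv_pow]
  calc ‖(Nat.multinomial Finset.univ α : ℚ_[p])‖ * ‖∏ i, ((y (i.1 + 1) : ℚ_[p])) ^ (α i)‖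
      ≤ (p:ℝ) ^ (-(d:ℤ)) * 1 :=
        mul_le_mul hmultle hprodle (norm_nonneg _) (by positivity)
    _ = (p:ℝ) ^ (-(d:ℤ)) := mul_one _
end

section
/- Let p be a prime and Y ∈ 1 + z·ℤ_p⟦z⟧ a formal power series with Y(0) = 1 and all coefficients in ℤ_p. Then for all n, m ∈ ℕ, the m-th coefficient of Y(z)^n is divisible by p^{max(0, ord_p(n) − ord_p(m))} in ℤ_p. -/
open PowerSeries

lemma norm_natCast_padicInt (p : ℕ) [Fact p.Prime] (k : ℕ) (hk : 0 < k) :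
    ‖(k : ℤ_[p])‖ = (p : ℝ) ^ (-(padicValNat p k : ℤ)) := by
  have hk0 : ((k : ℚ_[p])) ≠ 0 := by exact_mod_cast Nat.cast_ne_zero.mpr hk.ne'
  rw [PadicInt.norm_def, PadicInt.coe_natCast, Padic.norm_eq_zpow_neg_valuation hk0,
    Padic.valuation_natCast]

theorem stmt_12 (p : ℕ) [Fact p.Prime] (Y : PowerSeries ℤ_[p])
    (hY : PowerSeries.constantCoeff Y = 1) (n m : ℕ) (hn : 0 < n) (hm : 0 < m) :
    ‖PowerSeries.coeff m (Y ^ n)‖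
      ≤ (p : ℝ) ^ (-(max 0 ((padicValNat p n : ℤ) - (padicValNat p m : ℤ)))) := by
  have key : (PowerSeries.coeff m (Y ^ n)) * (m : ℤ_[p])
      = (n : ℤ_[p]) * PowerSeries.coeff (m - 1) (Y ^ (n - 1) * d⁄dX ℤ_[p] Y) := by
    have h1 := PowerSeries.coeff_derivative (Y ^ n) (m - 1)
    rw [Nat.sub_add_cancel hm] at h1
    have h2 : d⁄dX ℤ_[p] (Y ^ n) = n • (Y ^ (n - 1) * d⁄dX ℤ_[p] Y) := by
      rw [Derivation.leibniz_pow, smul_eq_mul, nsmul_eq_mul]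
    rw [h2, map_nsmul, nsmul_eq_mul, Nat.cast_sub hm] at h1
    push_cast at h1
    linear_combination -h1
  have hnorm : ‖PowerSeries.coeff m (Y ^ n)‖ * (p : ℝ) ^ (-(padicValNat p m : ℤ))
      ≤ (p : ℝ) ^ (-(padicValNat p n : ℤ)) := by
    calc ‖PowerSeries.coeff m (Y ^ n)‖ * (p : ℝ) ^ (-(padicValNat p m : ℤ))
        = ‖(PowerSeries.coeff m (Y ^ n)) * (m : ℤ_[p])‖ := by
          rw [norm_mul, norm_natCast_padicInt p m hm]
      _ = ‖(n : ℤ_[p])‖ * ‖PowerSeries.coeff (m - 1) (Y ^ (n - 1) * d⁄dX ℤ_[p] Y)‖ := by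
          rw [key, norm_mul]
      _ ≤ ‖(n : ℤ_[p])‖ * 1 := by
          gcongr; exact PadicInt.norm_le_one _
      _ = (p : ℝ) ^ (-(padicValNat p n : ℤ)) := by
          rw [mul_one, norm_natCast_padicInt p n hn]
  have hp1 : (1 : ℝ) < (p : ℝ) := by exact_mod_cast (Fact.out : p.Prime).one_lt
  rcases le_or_gt ((padicValNat p n : ℤ)) ((padicValNat p m : ℤ)) with h | h
  · rw [max_eq_left (by omega), neg_zero, zpow_zero]
    exact PadicInt.norm_le_one _
  · rw [max_eq_right (by omega)]
    have hmpos : (0 : ℝ) < (p : ℝ) ^ (-(padicValNat p m : ℤ)) :=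
      zpow_pos (by positivity) _
    rw [← le_div_iff₀ hmpos] at hnorm
    calc ‖PowerSeries.coeff m (Y ^ n)‖
        ≤ (p : ℝ) ^ (-(padicValNat p n : ℤ)) / (p : ℝ) ^ (-(padicValNat p m : ℤ)) := hnorm
      _ = (p : ℝ) ^ (-((padicValNat p n : ℤ) - (padicValNat p m : ℤ))) := by
          rw [← zpow_sub₀ (by positivity)]; ring_nf
end

section
/- Let F, G, H be formal power series with F, G ∈ z·ℚ⟦z⟧ mutually compositionally inverse (F(G(z)) = G(F(z)) = z, with F, G having nonzero linear term) and H ∈ z·ℚ⟦z⟧. Then for all n ≥ 1, the n-th coefficient of H(G(z)) equals (1/n) times the coefficient of z^0 in the Laurent series δH(z)/F(z)^n, where δ = z·d/dz. -/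
open PowerSeries Finset

/-- Composition `H(G(z))` of formal power series (meaningful when `G` has zero
constant term). -/
noncomputable def pcomp {K : Type*} [Field K] (H G : PowerSeries K) : PowerSeries K :=
  PowerSeries.mk fun n =>
    ∑ k ∈ Finset.range (n + 1), PowerSeries.coeff k H * PowerSeries.coeff n (G ^ k)

/-- The Euler operator `δ = z·d/dz`. -/
noncomputable def pdelta {K : Type*} [Field K] (H : PowerSeries K) : PowerSeries K :=
  PowerSeries.mk fun n => (n : K) * PowerSeries.coeff n H

private lemma coeff_pcomp (H G : PowerSeries ℚ) (n : ℕ) :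
    PowerSeries.coeff n (pcomp H G) =
      ∑ k ∈ range (n + 1), coeff k H * coeff n (G ^ k) := by
  simp [pcomp, coeff_mk]

private lemma coeff_pow_eq_zero {G : PowerSeries ℚ} (hG : constantCoeff G = 0)
    {i m : ℕ} (h : i < m) : coeff i (G ^ m) = 0 := by
  have hd : (X : ℚ⟦X⟧) ^ m ∣ G ^ m := pow_dvd_pow_of_dvd (X_dvd_iff.mpr hG) m
  exact X_pow_dvd_iff.mp hd i h

private lemma coeff_eval₂ (G : ℚ⟦X⟧) (hG : constantCoeff G = 0) (p : Polynomial ℚ) (i : ℕ) :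
    coeff i (Polynomial.eval₂ (C (R := ℚ)) G p) =
      ∑ k ∈ range (i + 1), p.coeff k * coeff i (G ^ k) := by
  rw [Polynomial.eval₂_eq_sum_range' (C (R := ℚ))
      (show p.natDegree < p.natDegree + i + 2 by omega) G, map_sum]
  simp_rw [coeff_C_mul]
  refine (Finset.sum_subset (Finset.range_subset_range.mpr (by omega)) ?_).symm
  intro k _ hk
  rw [coeff_pow_eq_zero hG (by simpa using hk), mul_zero]

private lemma coeff_pcomp_eval (H G : ℚ⟦X⟧) (hG : constantCoeff G = 0) {n i : ℕ} (h : i ≤ n) :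
    coeff i (pcomp H G) = coeff i (Polynomial.eval₂ (C (R := ℚ)) G (trunc (n + 1) H)) := by
  rw [coeff_pcomp, coeff_eval₂ G hG]
  refine Finset.sum_congr rfl fun k hk => ?_
  rw [coeff_trunc, if_pos (by simp at hk; omega)]

private lemma pcomp_mul (A B G : ℚ⟦X⟧) (hG : constantCoeff G = 0) :
    pcomp (A * B) G = pcomp A G * pcomp B G := by
  ext n
  calc coeff n (pcomp (A * B) G)
      = coeff n (Polynomial.eval₂ (C (R := ℚ)) G (trunc (n + 1) (A * B))) :=
        coeff_pcomp_eval _ _ hG le_rfl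
    _ = coeff n (Polynomial.eval₂ (C (R := ℚ)) G (trunc (n + 1) A * trunc (n + 1) B)) := by
        rw [coeff_eval₂ G hG, coeff_eval₂ G hG]
        refine Finset.sum_congr rfl fun k hk => ?_
        simp only [mem_range] at hk
        rw [coeff_trunc, if_pos (by omega), ← Polynomial.coeff_coe, Polynomial.coe_mul,
          ← coeff_mul_eq_coeff_trunc_mul_trunc A B (show k < n + 1 by omega)]
    _ = coeff n (Polynomial.eval₂ (C (R := ℚ)) G (trunc (n+1) A) *
          Polynomial.eval₂ (C (R := ℚ)) G (trunc (n+1) B)) := by rw [Polynomial.eval₂_mul]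
    _ = coeff n (pcomp A G * pcomp B G) := by
        rw [PowerSeries.coeff_mul, PowerSeries.coeff_mul]
        refine Finset.sum_congr rfl fun p hp => ?_
        rw [HasAntidiagonal.mem_antidiagonal] at hp
        rw [← coeff_pcomp_eval A G hG (show p.1 ≤ n by omega),
          ← coeff_pcomp_eval B G hG (show p.2 ≤ n by omega)]

private lemma pcomp_one (G : ℚ⟦X⟧) : pcomp 1 G = 1 := by
  ext n
  rw [coeff_pcomp, Finset.sum_eq_single 0]
  · simp
  · intro k _ h0
    rw [coeff_one, if_neg h0, zero_mul]
  · intro h; exact absurd (Finset.mem_range.mpr (by omega)) h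

private lemma pcomp_pow (P G : ℚ⟦X⟧) (hG : constantCoeff G = 0) (k : ℕ) :
    pcomp (P ^ k) G = (pcomp P G) ^ k := by
  induction k with
  | zero => simpa using pcomp_one G
  | succ k ih => rw [pow_succ, pcomp_mul _ _ _ hG, ih, pow_succ]

private lemma pow_mul_inv_pow (U : ℚ⟦X⟧) (hU : constantCoeff U ≠ 0) (a b : ℕ) :
    U ^ a * (U ^ (a + b))⁻¹ = (U ^ b)⁻¹ := by
  rw [PowerSeries.eq_inv_iff_mul_eq_one (by rw [map_pow]; exact pow_ne_zero b hU)]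
  have h1 : U ^ a * (U ^ (a + b))⁻¹ * U ^ b = U ^ (a+b) * (U ^ (a+b))⁻¹ := by ring
  rw [h1, PowerSeries.mul_inv_cancel _ (by rw [map_pow]; exact pow_ne_zero _ hU)]

private lemma deriv_inv_pow (U : ℚ⟦X⟧) (hU : constantCoeff U ≠ 0) (j : ℕ) :
    d⁄dX ℚ ((U ^ (j+1))⁻¹) =
      (-(j:ℚ⟦X⟧) - 1) * ((U ^ (j+2))⁻¹ * d⁄dX ℚ U) := by
  rw [derivative_inv', Derivation.leibniz_pow]
  have h4 : (U ^ (j+1))⁻¹ * (U ^ (j+1))⁻¹ * U ^ j = (U ^ (j+2))⁻¹ := by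
    have h5 : U ^ j * (U ^ (j + (j + 2)))⁻¹ = (U ^ (j+2))⁻¹ := pow_mul_inv_pow U hU j (j+2)
    have h6 : (U ^ (j + (j + 2)) : ℚ⟦X⟧)⁻¹ = (U ^ (j+1))⁻¹ * (U ^ (j+1))⁻¹ := by
      rw [show j + (j+2) = (j+1) + (j+1) by omega, pow_add, PowerSeries.mul_inv_rev]
    rw [h6] at h5; linear_combination h5
  have hsmul : ((j+1) • (U ^ (j + 1 - 1) • d⁄dX ℚ U) : ℚ⟦X⟧)
      = ((j:ℚ⟦X⟧) + 1) * (U ^ j * d⁄dX ℚ U) := by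
    rw [nsmul_eq_mul, smul_eq_mul]
    push_cast
    ring_nf
  rw [hsmul]
  linear_combination (-((j:ℚ⟦X⟧)+1) * d⁄dX ℚ U) * h4

private lemma coeff_dF (U : ℚ⟦X⟧) (hU : constantCoeff U ≠ 0) (m j : ℕ) :
    coeff (m + j) (d⁄dX ℚ ((X*U)^(m+1)) * (U^(m+1+j))⁻¹) =
      if j = 0 then (m:ℚ)+1 else 0 := by
  have hdF : d⁄dX ℚ (X*U) = X * d⁄dX ℚ U + U := by
    rw [Derivation.leibniz, derivative_X, smul_eq_mul, smul_eq_mul, mul_one]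
  have hd : d⁄dX ℚ ((X*U)^(m+1)) = ((m:ℚ⟦X⟧)+1) * ((X*U)^m * (X * d⁄dX ℚ U + U)) := by
    rw [Derivation.leibniz_pow, hdF, nsmul_eq_mul, smul_eq_mul, Nat.add_sub_cancel]
    push_cast
    ring
  have hA : U ^ m * (U ^ (m+1+j))⁻¹ = (U ^ (j+1))⁻¹ := by
    have := pow_mul_inv_pow U hU m (j+1); rwa [show m + (j+1) = m+1+j by omega] at this
  have hB : U ^ (m+1) * (U ^ (m+1+j))⁻¹ = (U ^ j)⁻¹ := by
    have := pow_mul_inv_pow U hU (m+1) j; rwa [show (m+1) + j = m+1+j by omega] at this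
  have key : d⁄dX ℚ ((X*U)^(m+1)) * (U^(m+1+j))⁻¹
      = PowerSeries.C ((m:ℚ)+1) *
          (X^m * (X * (d⁄dX ℚ U * (U^(j+1))⁻¹) + (U^j)⁻¹)) := by
    rw [hd, mul_pow, map_add, map_natCast, map_one]
    linear_combination (((m:ℚ⟦X⟧)+1) * X^m * X * d⁄dX ℚ U) * hA
      + (((m:ℚ⟦X⟧)+1) * X^m) * hB
  rw [key, coeff_C_mul, show m + j = j + m by omega, coeff_X_pow_mul]
  rcases Nat.eq_zero_or_pos j with hj | hj
  · subst hj
    rw [if_pos rfl, map_add, pow_zero, inv_one, coeff_zero_eq_constantCoeff, map_mul,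
      constantCoeff_X, zero_mul, map_one]
    ring
  · obtain ⟨j', rfl⟩ : ∃ j', j = j' + 1 := ⟨j - 1, by omega⟩
    rw [if_neg (by omega), map_add, coeff_succ_X_mul]
    have hcd : coeff j' (d⁄dX ℚ ((U ^ (j'+1))⁻¹))
        = coeff (j'+1) ((U ^ (j'+1))⁻¹) * ((j':ℚ)+1) := by
      rw [coeff_derivative]
    rw [deriv_inv_pow U hU j'] at hcd
    have hsc : (-(j':ℚ⟦X⟧) - 1) = PowerSeries.C (-(j':ℚ)-1) := by
      rw [map_sub, map_neg, map_natCast, map_one]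
    rw [hsc, coeff_C_mul] at hcd
    have h9 : coeff j' ((U ^ (j'+2))⁻¹ * d⁄dX ℚ U)
        = - coeff (j'+1) ((U ^ (j'+1))⁻¹) := by
      refine mul_left_cancel₀ (a := ((j':ℚ)+1)) (by positivity) ?_
      linear_combination -hcd
    rw [mul_comm (d⁄dX ℚ U), show j' + 1 + 1 = j' + 2 from rfl, h9]
    ring

private lemma core (F G U : ℚ⟦X⟧) (hF0 : constantCoeff F = 0)
    (hXU : F = X * U) (hU0 : constantCoeff U ≠ 0)
    (hcomp : ∀ k : ℕ, pcomp (G ^ k) F = X ^ k)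
    (n k : ℕ) (hk1 : 1 ≤ k) (hkn : k ≤ n) :
    (n:ℚ) * coeff n (G ^ k) = (k:ℚ) * coeff (n-k) ((U ^ n)⁻¹) := by
  obtain ⟨n', rfl⟩ : ∃ n', n = n' + 1 := ⟨n - 1, by omega⟩
  obtain ⟨k', rfl⟩ : ∃ k', k = k' + 1 := ⟨k - 1, by omega⟩
  set n : ℕ := n' + 1 with hn
  set k : ℕ := k' + 1 with hk
  set b : ℕ → ℚ := fun m => coeff m (G ^ k) with hb
  set W : ℚ⟦X⟧ := (U ^ n)⁻¹ with hW
  set S : ℚ⟦X⟧ := ∑ m ∈ range (n + 1), b m • F ^ m with hS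
  have factA : ∀ i, i ≤ n → coeff i S = coeff i ((X : ℚ⟦X⟧) ^ k) := by
    intro i hi
    have h1 : coeff i S = ∑ m ∈ range (n + 1), b m * coeff i (F ^ m) := by
      rw [hS, map_sum]
      refine Finset.sum_congr rfl fun m _ => ?_
      rw [map_smul, smul_eq_mul]
    rw [h1, ← Finset.sum_subset (Finset.range_subset_range.mpr (by omega) :
        range (i + 1) ⊆ range (n + 1)) ?_]
    · rw [← coeff_pcomp, hcomp k]
    · intro m hm hm'
      simp only [mem_range] at hm hm'
      rw [coeff_pow_eq_zero hF0 (by omega), mul_zero]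
  have expand : d⁄dX ℚ S * W = ∑ m ∈ range (n + 1), b m • (d⁄dX ℚ (F ^ m) * W) := by
    rw [hS, map_sum, Finset.sum_mul]
    refine Finset.sum_congr rfl fun m _ => ?_
    rw [Derivation.map_smul, smul_mul_assoc]
  have factC : coeff n' (d⁄dX ℚ S * W) = (n : ℚ) * b n := by
    rw [expand, map_sum]
    have hterm : ∀ m ∈ range (n + 1), m ≠ n →
        coeff n' (b m • (d⁄dX ℚ (F ^ m) * W)) = 0 := by
      intro m hm hmn
      simp only [mem_range] at hm
      rcases Nat.eq_zero_or_pos m with rfl | hm1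
      · simp
      · obtain ⟨m'', rfl⟩ : ∃ m'', m = m'' + 1 := ⟨m - 1, by omega⟩
        have h := coeff_dF U hU0 m'' (n - (m'' + 1))
        rw [show m'' + (n - (m'' + 1)) = n' by omega,
          show m'' + 1 + (n - (m'' + 1)) = n by omega,
          if_neg (by omega), ← hXU] at h
        rw [map_smul, smul_eq_mul, h, mul_zero]
    rw [Finset.sum_eq_single n hterm (fun h => absurd (mem_range.mpr (by omega)) h)]
    have h := coeff_dF U hU0 n' 0
    rw [add_zero, add_zero, if_pos rfl, ← hXU, ← hn] at h
    rw [map_smul, smul_eq_mul, h]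
    push_cast [hn]
    ring
  have factB : coeff n' (d⁄dX ℚ S * W) = (k : ℚ) * coeff (n - k) W := by
    have hcongr : ∀ p ∈ antidiagonal n',
        coeff p.1 (d⁄dX ℚ S) * coeff p.2 W
          = coeff p.1 (d⁄dX ℚ ((X : ℚ⟦X⟧) ^ k)) * coeff p.2 W := by
      intro p hp
      rw [HasAntidiagonal.mem_antidiagonal] at hp
      rw [coeff_derivative, factA (p.1 + 1) (by omega), ← coeff_derivative]
    rw [PowerSeries.coeff_mul, Finset.sum_congr rfl hcongr, ← PowerSeries.coeff_mul]
    have hdX : d⁄dX ℚ ((X : ℚ⟦X⟧) ^ k) = PowerSeries.C ((k':ℚ)+1) * X ^ k' := by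
      rw [hk, Derivation.leibniz_pow, derivative_X, Nat.add_sub_cancel, nsmul_eq_mul,
        smul_eq_mul, mul_one, map_add, map_natCast, map_one]
      push_cast
      ring
    rw [hdX, mul_assoc, coeff_C_mul, show n' = (n - k) + k' by omega, coeff_X_pow_mul]
    push_cast [hk]
    ring
  have hfin := factC.symm.trans factB
  rw [hb] at hfin
  push_cast at hfin ⊢
  linarith [hfin]

/-- Lagrange inversion: if `F` and `G` are mutually inverse under composition and
`F = z·U`, then `[H(G(z))]ₙ = (1/n)·[δH(z)/F(z)ⁿ]₀ = (1/n)·[δH(z)·U(z)⁻ⁿ]ₙ`. -/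
theorem stmt_16 (F G H : PowerSeries ℚ)
    (hF0 : PowerSeries.constantCoeff F = 0) (hG0 : PowerSeries.constantCoeff G = 0)
    (hF1 : PowerSeries.coeff 1 F ≠ 0) (hG1 : PowerSeries.coeff 1 G ≠ 0)
    (hH0 : PowerSeries.constantCoeff H = 0)
    (hFG : pcomp F G = PowerSeries.X) (hGF : pcomp G F = PowerSeries.X)
    (U : PowerSeries ℚ) (hU : F = PowerSeries.X * U) (n : ℕ) (hn : 0 < n) :
    PowerSeries.coeff n (pcomp H G) =
      (1 / (n : ℚ)) * PowerSeries.coeff n (pdelta H * (U ^ n)⁻¹) := by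
  have hU0 : constantCoeff U ≠ 0 := by
    intro h
    apply hF1
    rw [hU, show (1:ℕ) = 0 + 1 from rfl, coeff_succ_X_mul, coeff_zero_eq_constantCoeff, h]
  have hcomp : ∀ k : ℕ, pcomp (G ^ k) F = X ^ k := by
    intro k
    rw [pcomp_pow G F hF0 k, hGF]
  have hWsum : coeff n (pdelta H * (U ^ n)⁻¹)
      = ∑ k ∈ range (n + 1), (k:ℚ) * coeff k H * coeff (n - k) ((U ^ n)⁻¹) := by
    rw [PowerSeries.coeff_mul, Finset.Nat.sum_antidiagonal_eq_sum_range_succ_mk]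
    refine Finset.sum_congr rfl fun k _ => ?_
    simp [pdelta, coeff_mk]
  rw [coeff_pcomp, hWsum, Finset.mul_sum]
  refine Finset.sum_congr rfl fun k hk => ?_
  simp only [mem_range] at hk
  rcases Nat.eq_zero_or_pos k with rfl | hk1
  · rw [coeff_zero_eq_constantCoeff, hH0]
    simp
  · have hcore := core F G U hF0 hU hU0 hcomp n k hk1 (by omega)
    have hn0 : (n:ℚ) ≠ 0 := Nat.cast_ne_zero.mpr (by omega)
    field_simp
    linear_combination coeff k H * hcore
end

section
/- Let V ∈ z·ℚ⟦z⟧, ν ∈ ℚ, and define ∫V by sending z^n to z^n/n coefficientwise. Suppose V^{(+,ν)} ∈ z·ℚ⟦z⟧ satisfies the functional equation ∫V^{(+,ν)}(z·exp(−ν·∫V(z))) = ∫V(z). Then for all n ≥ 1 with ν ≠ 0, the n-th coefficient of V^{(+,ν)} equals (1/ν)·[exp(ν n ∫V(z))/z^n]_0, where [·]_0 extracts the coefficient of z^0. -/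
/-- The formal exponential power series `∑ zⁿ/n!`. -/
noncomputable def pexp (K : Type*) [Field K] : PowerSeries K :=
  PowerSeries.mk fun n => 1 / (n.factorial : K)

/-- Logarithmic integration `∫ : zⁿ ↦ zⁿ/n`. -/
noncomputable def intOp (V : PowerSeries ℚ) : PowerSeries ℚ :=
  PowerSeries.mk fun n => if n = 0 then 0 else PowerSeries.coeff n V / (n : ℚ)

open PowerSeries Finset

lemma my_coeff_pow_zero {G : PowerSeries ℚ} (hG : constantCoeff G = 0) {k m : ℕ} (h : m < k) :
    coeff m (G ^ k) = 0 := by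
  have hx : (X : PowerSeries ℚ) ^ k ∣ G ^ k := pow_dvd_pow_of_dvd (X_dvd_iff.mpr hG) k
  exact X_pow_dvd_iff.mp hx m h

lemma my_coeff_pcomp (H G : PowerSeries ℚ) (m : ℕ) :
    coeff m (pcomp H G) = ∑ k ∈ range (m + 1), coeff k H * coeff m (G ^ k) := by
  simp [pcomp]

lemma my_coeff_pexp (k : ℕ) : coeff k (pexp ℚ) = 1 / (k.factorial : ℚ) := by
  simp [pexp]

lemma my_coeff_pcomp_mul {G : PowerSeries ℚ} (hG : constantCoeff G = 0)
    (H E : PowerSeries ℚ) (m : ℕ) :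
    coeff m (pcomp H G * E) = ∑ k ∈ range (m + 1), coeff k H * coeff m (G ^ k * E) := by
  rw [coeff_mul]
  have h1 : ∀ p ∈ antidiagonal m, coeff p.1 (pcomp H G) * coeff p.2 E
      = ∑ k ∈ range (m + 1), coeff k H * (coeff p.1 (G ^ k) * coeff p.2 E) := by
    intro p hp
    have hp1 : p.1 ≤ m := by
      have := Finset.HasAntidiagonal.mem_antidiagonal.mp hp; omega
    rw [my_coeff_pcomp, Finset.sum_mul]
    rw [Finset.sum_subset (Finset.range_subset_range.mpr (by omega : p.1 + 1 ≤ m + 1))]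
    · exact Finset.sum_congr rfl fun k _ => by ring
    · intro k _ hk
      rw [my_coeff_pow_zero hG (by simpa using hk)]
      ring
  rw [Finset.sum_congr rfl h1, Finset.sum_comm]
  exact Finset.sum_congr rfl fun k _ => by rw [coeff_mul, Finset.mul_sum]

lemma my_coeff_deriv_pcomp_mul {G : PowerSeries ℚ} (hG : constantCoeff G = 0)
    (H E : PowerSeries ℚ) (m : ℕ) :
    coeff m (d⁄dX ℚ (pcomp H G) * E)
      = ∑ k ∈ range (m + 2), coeff k H * coeff m (d⁄dX ℚ (G ^ k) * E) := by
  rw [coeff_mul]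
  have h1 : ∀ p ∈ antidiagonal m, coeff p.1 (d⁄dX ℚ (pcomp H G)) * coeff p.2 E
      = ∑ k ∈ range (m + 2), coeff k H * (coeff p.1 (d⁄dX ℚ (G ^ k)) * coeff p.2 E) := by
    intro p hp
    have hp1 : p.1 ≤ m := by
      have := Finset.HasAntidiagonal.mem_antidiagonal.mp hp; omega
    rw [coeff_derivative, my_coeff_pcomp, Finset.sum_mul, Finset.sum_mul]
    rw [Finset.sum_subset (Finset.range_subset_range.mpr (by omega : p.1 + 1 + 1 ≤ m + 2))]
    · refine Finset.sum_congr rfl fun k _ => ?_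
      rw [coeff_derivative]; ring
    · intro k _ hk
      rw [my_coeff_pow_zero hG (by simpa using hk)]
      ring
  rw [Finset.sum_congr rfl h1, Finset.sum_comm]
  exact Finset.sum_congr rfl fun k _ => by rw [coeff_mul, Finset.mul_sum]

lemma my_ode {G : PowerSeries ℚ} (hG : constantCoeff G = 0) :
    d⁄dX ℚ (pcomp (pexp ℚ) G) = d⁄dX ℚ G * pcomp (pexp ℚ) G := by
  ext m
  have l := my_coeff_deriv_pcomp_mul hG (pexp ℚ) 1 m
  rw [mul_one] at l
  rw [l, mul_comm (d⁄dX ℚ G), my_coeff_pcomp_mul hG (pexp ℚ) (d⁄dX ℚ G) m]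
  rw [Finset.sum_range_succ']
  have h0 : coeff 0 (pexp ℚ) * coeff m (d⁄dX ℚ (G ^ 0) * 1) = 0 := by
    simp
  rw [h0, add_zero]
  refine Finset.sum_congr rfl fun j hj => ?_
  rw [mul_one, Derivation.leibniz_pow]
  have : (j + 1) • G ^ (j + 1 - 1) • d⁄dX ℚ G = C ((j : ℚ) + 1) * (G ^ j * d⁄dX ℚ G) := by
    simp only [Nat.succ_sub_one, smul_eq_mul, nsmul_eq_mul]
    rw [show ((j : ℚ) + 1) = ((j + 1 : ℕ) : ℚ) by push_cast; ring, map_natCast]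
  rw [this, coeff_C_mul, my_coeff_pexp, my_coeff_pexp, Nat.factorial_succ]
  push_cast
  have hj1 : ((j : ℚ) + 1) ≠ 0 := by positivity
  have hjf : ((j.factorial : ℚ)) ≠ 0 := by exact_mod_cast j.factorial_ne_zero
  field_simp

lemma my_ode_uniq {A Y Z : PowerSeries ℚ} (hY : d⁄dX ℚ Y = A * Y) (hZ : d⁄dX ℚ Z = A * Z)
    (h0 : constantCoeff Y = constantCoeff Z) : Y = Z := by
  ext m
  induction m using Nat.strong_induction_on with
  | _ m ih =>
    match m with
    | 0 => simpa [coeff_zero_eq_constantCoeff] using h0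
    | Nat.succ m =>
      have e1 := congrArg (coeff m) hY
      have e2 := congrArg (coeff m) hZ
      rw [coeff_derivative] at e1 e2
      have e3 : coeff m (A * Y) = coeff m (A * Z) := by
        rw [coeff_mul, coeff_mul]
        refine Finset.sum_congr rfl fun p hp => ?_
        have hp2 : p.2 < m + 1 := by
          have := Finset.HasAntidiagonal.mem_antidiagonal.mp hp; omega
        rw [ih p.2 hp2]
      have hm1 : ((m : ℚ) + 1) ≠ 0 := by positivity
      have := e1.trans (e3.trans e2.symm)
      exact mul_right_cancel₀ hm1 this

noncomputable def EE (U : PowerSeries ℚ) (c : ℚ) : PowerSeries ℚ := pcomp (pexp ℚ) (c • U)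

lemma EE_const (U : PowerSeries ℚ) (c : ℚ) : constantCoeff (EE U c) = 1 := by
  rw [← coeff_zero_eq_constantCoeff]
  have h := my_coeff_pcomp (pexp ℚ) (c • U) 0
  simpa [my_coeff_pexp, EE] using h

variable {U : PowerSeries ℚ}

lemma EE_ode (hU : constantCoeff U = 0) (c : ℚ) :
    d⁄dX ℚ (EE U c) = C c * d⁄dX ℚ U * EE U c := by
  have hG : constantCoeff (c • U) = 0 := by
    rw [← coeff_zero_eq_constantCoeff] at hU ⊢
    rw [map_smul, hU, smul_zero]
  have hD : d⁄dX ℚ (c • U) = C c * d⁄dX ℚ U := by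
    rw [smul_eq_C_mul, Derivation.leibniz, derivative_C, smul_eq_mul, smul_eq_mul,
      mul_zero, add_zero]
  have h := my_ode hG
  rw [hD] at h
  exact h

lemma EE_add (hU : constantCoeff U = 0) (a b : ℚ) :
    EE U a * EE U b = EE U (a + b) := by
  refine my_ode_uniq (A := C (a + b) * d⁄dX ℚ U) ?_ (EE_ode hU (a + b)) ?_
  · rw [Derivation.leibniz, smul_eq_mul, smul_eq_mul, EE_ode hU a, EE_ode hU b, map_add]
    ring
  · rw [map_mul, EE_const, EE_const, EE_const, one_mul]

lemma EE_zero (hU : constantCoeff U = 0) : EE U 0 = 1 := by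
  refine my_ode_uniq (A := C 0 * d⁄dX ℚ U) (EE_ode hU 0) ?_ ?_
  · simp
  · rw [EE_const, map_one]

lemma EE_pow (hU : constantCoeff U = 0) (c : ℚ) (k : ℕ) :
    (EE U c) ^ k = EE U (k * c) := by
  induction k with
  | zero => simp [EE_zero hU]
  | succ k ih =>
    rw [pow_succ, ih, EE_add hU]
    push_cast
    ring_nf

lemma my_coeff_X_pow_mul_zero (P : PowerSeries ℚ) {k m : ℕ} (h : m < k) :
    coeff m ((X : PowerSeries ℚ) ^ k * P) = 0 :=
  X_pow_dvd_iff.mp (dvd_mul_right _ _) m h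

theorem stmt_17 (V W : PowerSeries ℚ)
    (hV0 : PowerSeries.constantCoeff V = 0) (hW0 : PowerSeries.constantCoeff W = 0)
    (ν : ℚ) (hν : ν ≠ 0)
    (hfe : pcomp (intOp W) (PowerSeries.X * pcomp (pexp ℚ) ((-ν) • intOp V)) = intOp V)
    (n : ℕ) (hn : 0 < n) :
    PowerSeries.coeff n W =
      (1 / ν) * PowerSeries.coeff n (pcomp (pexp ℚ) ((ν * (n : ℚ)) • intOp V)) := by
  obtain ⟨m, rfl⟩ : ∃ m, n = m + 1 := ⟨n - 1, by omega⟩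
  set U : PowerSeries ℚ := intOp V with hUdef
  have hU : constantCoeff U = 0 := by
    rw [← coeff_zero_eq_constantCoeff, hUdef, intOp, coeff_mk]
    simp
  set c : ℚ := ν * ((m + 1 : ℕ) : ℚ) with hc
  set E : PowerSeries ℚ := EE U c with hE
  set F : PowerSeries ℚ := X * EE U (-ν) with hF
  have hfe' : pcomp (intOp W) F = U := by
    rw [hF]; exact hfe
  have hF0 : constantCoeff F = 0 := by
    rw [hF, map_mul, constantCoeff_X, zero_mul]
  have hm1 : ((m : ℚ) + 1) ≠ 0 := by positivity
  -- generic: F ^ k = X ^ k * EE U (k * -ν)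
  have hFk : ∀ k : ℕ, F ^ k = X ^ k * EE U ((k : ℚ) * (-ν)) := by
    intro k
    rw [hF, mul_pow, EE_pow hU]
  have hDX : ∀ j : ℕ, d⁄dX ℚ ((X : PowerSeries ℚ) ^ (j + 1))
      = C (((j + 1 : ℕ) : ℚ)) * (X : PowerSeries ℚ) ^ j := by
    intro j
    rw [Derivation.leibniz_pow, derivative_X, Nat.add_sub_cancel, smul_eq_mul, mul_one,
      nsmul_eq_mul, ← map_natCast (C : ℚ →+* PowerSeries ℚ) (j + 1)]
  -- expansion of d⁄dX (F^(j+1)) * E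
  have hexp : ∀ j : ℕ, d⁄dX ℚ (F ^ (j + 1)) * E
      = C (((j + 1 : ℕ) : ℚ) * (-ν)) * ((X : PowerSeries ℚ) ^ (j + 1) *
              (d⁄dX ℚ U * (EE U (((j + 1 : ℕ) : ℚ) * (-ν)) * E)))
        + C (((j + 1 : ℕ) : ℚ)) *
            ((X : PowerSeries ℚ) ^ j * (EE U (((j + 1 : ℕ) : ℚ) * (-ν)) * E)) := by
    intro j
    rw [hFk (j + 1), Derivation.leibniz, EE_ode hU, hDX, smul_eq_mul, smul_eq_mul]
    ring
  -- the combined exponential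
  have hcomb : ∀ j : ℕ, EE U (((j + 1 : ℕ) : ℚ) * (-ν)) * E
      = EE U (ν * (((m : ℚ) - j))) := by
    intro j
    rw [hE, EE_add hU]
    congr 1
    rw [hc]; push_cast; ring
  -- value of the k = m+1 term
  have htop : coeff m (d⁄dX ℚ (F ^ (m + 1)) * E) = ((m : ℚ) + 1) := by
    rw [hexp m, hcomb m]
    have h0 : EE U (ν * ((m : ℚ) - m)) = 1 := by
      rw [show ν * ((m : ℚ) - m) = 0 by ring, EE_zero hU]
    rw [h0, mul_one, mul_one, map_add, coeff_C_mul, coeff_C_mul,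
      my_coeff_X_pow_mul_zero _ (Nat.lt_succ_self m), mul_zero, zero_add, coeff_X_pow]
    simp
  -- vanishing of intermediate terms
  have hmid : ∀ j e : ℕ, m = e + 1 + j → coeff m (d⁄dX ℚ (F ^ (j + 1)) * E) = 0 := by
    intro j e hme
    rw [hexp j, hcomb j]
    set A : PowerSeries ℚ := EE U (ν * ((m : ℚ) - j)) with hA
    have he1 : coeff m ((X : PowerSeries ℚ) ^ (j + 1) * (d⁄dX ℚ U * A))
        = coeff e (d⁄dX ℚ U * A) := by
      rw [show m = e + (j + 1) by omega]
      exact coeff_X_pow_mul _ _ _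
    have he2 : coeff m ((X : PowerSeries ℚ) ^ j * A) = coeff (e + 1) A := by
      rw [show m = e + 1 + j by omega]
      exact coeff_X_pow_mul _ _ _
    have hODE := congrArg (coeff e) (EE_ode hU (ν * ((m : ℚ) - j)))
    rw [coeff_derivative, mul_assoc, coeff_C_mul, ← hA] at hODE
    -- hODE : coeff (e+1) A * (e+1) = ν*(m-j) * coeff e (DU * A)
    have hmj : (m : ℚ) - j = (e : ℚ) + 1 := by
      have : (m : ℚ) = (e : ℚ) + 1 + (j : ℚ) := by exact_mod_cast congrArg (Nat.cast : ℕ → ℚ) hme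
      linarith
    have he1n : ((e : ℚ) + 1) ≠ 0 := by positivity
    have hAode : coeff (e + 1) A = ν * coeff e (d⁄dX ℚ U * A) := by
      have h' : coeff (e + 1) A * ((e : ℚ) + 1)
          = ν * ((e : ℚ) + 1) * coeff e (d⁄dX ℚ U * A) := by
        rw [hODE, hmj]; try (push_cast; ring)
      have := mul_right_cancel₀ he1n (by rw [h']; ring :
        coeff (e + 1) A * ((e : ℚ) + 1)
          = (ν * coeff e (d⁄dX ℚ U * A)) * ((e : ℚ) + 1))
      exact this
    rw [map_add, coeff_C_mul, coeff_C_mul, he1, he2, hAode]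
    push_cast
    ring
  -- the key identity
  have key := congrArg (coeff m) (congrArg (fun f => d⁄dX ℚ f * E) hfe')
  rw [my_coeff_deriv_pcomp_mul hF0 (intOp W) E m] at key
  -- evaluate the sum
  have hsum : ∑ k ∈ range (m + 2), coeff k (intOp W) * coeff m (d⁄dX ℚ (F ^ k) * E)
      = coeff (m + 1) W := by
    rw [Finset.sum_eq_single (m + 1)]
    · rw [htop, intOp, coeff_mk]
      simp only [Nat.succ_ne_zero, if_false]
      push_cast
      field_simp
    · intro k hk hne
      match k with
      | 0 => rw [intOp, coeff_mk]; simp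
      | Nat.succ j =>
        have hjm : j + 1 < m + 1 := by
          have := Finset.mem_range.mp hk; omega
        obtain ⟨e, he⟩ : ∃ e, m = e + 1 + j := ⟨m - j - 1, by omega⟩
        rw [hmid j e he, mul_zero]
    · intro h
      exact absurd (Finset.mem_range.mpr (by omega)) h
  rw [hsum] at key
  -- evaluate the right side
  have hEode := congrArg (coeff m) (EE_ode hU c)
  rw [coeff_derivative, mul_assoc, coeff_C_mul, ← hE] at hEode
  -- hEode : coeff (m+1) E * (m+1) = c * coeff m (DU * E)
  have hrhs : coeff m (d⁄dX ℚ U * E) = (1 / ν) * coeff (m + 1) E := by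
    have h1 : ν * ((m : ℚ) + 1) * coeff m (d⁄dX ℚ U * E)
        = ν * ((m : ℚ) + 1) * ((1 / ν) * coeff (m + 1) E) := by
      have h2 : c * coeff m (d⁄dX ℚ U * E) = coeff (m + 1) E * ((m : ℚ) + 1) := by
        rw [← hEode]; try (push_cast; ring)
      rw [show ν * ((m : ℚ) + 1) * ((1 / ν) * coeff (m + 1) E)
          = coeff (m + 1) E * ((m : ℚ) + 1) by field_simp]
      rw [← h2, hc]; push_cast; ring
    exact mul_left_cancel₀ (mul_ne_zero hν hm1) h1
  rw [hrhs] at key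
  exact key
end
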